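/- arXiv:math/0201016 — 6 statements merged into one kernel-verified Lean document; each statement's English description precedes it below -/
import Mathlib

section
/- Sub-Gaussian case of Lemma 2 (proved in its proof). Let ζ₁, …, ζ_l be i.i.d. real random variables with E(ζ₁) = 0 and Λ(λ) := log E(e^{λ ζ₁}) ≤ C₂ λ²/2 for all λ ∈ ℝ, and let G : ℝ → [0,∞) be measurable with G(x) ≤ C₁ x²/2 for all x ∈ ℝ. Then for every γ with 0 < γ < (C₁ C₂)^{−1} and every l ≥ 1: E exp{ γ l G( (ζ₁ + ⋯ + ζ_l)/l ) } ≤ (1 − γ C₁ C₂)^{−1/2}. -/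
open MeasureTheory Real ENNReal

lemma my_integrable_rexp_quadratic {b : ℝ} (hb : 0 < b) (c : ℝ) :
    Integrable (fun x : ℝ => Real.exp (-b * x ^ 2 + c * x)) := by
  have h := (integrable_cexp_quadratic (b := (b : ℂ)) (by simpa using hb) (c : ℂ) 0).re
  refine h.congr (Filter.Eventually.of_forall fun x => ?_)
  show RCLike.re (Complex.exp _) = _
  rw [show ((-(b:ℂ)) * (x:ℂ) ^ 2 + (c:ℂ) * (x:ℂ) + 0 : ℂ) = ((-b * x ^ 2 + c * x : ℝ) : ℂ) by
    push_cast; ring, ← Complex.ofReal_exp]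
  exact Complex.ofReal_re _

lemma my_integral_rexp_quadratic {b : ℝ} (hb : 0 < b) (c : ℝ) :
    ∫ x : ℝ, Real.exp (-b * x ^ 2 + c * x) = Real.sqrt (π / b) * Real.exp (c ^ 2 / (4 * b)) := by
  have h := integral_cexp_quadratic (b := (-b : ℂ)) (by simpa using hb) (c : ℂ) 0
  have h1 : ∀ x : ℝ, Complex.exp ((-b : ℂ) * x ^ 2 + (c : ℂ) * x + 0)
      = ((Real.exp (-b * x ^ 2 + c * x) : ℝ) : ℂ) := by
    intro x
    rw [show ((-b : ℂ) * (x:ℂ) ^ 2 + (c:ℂ) * (x:ℂ) + 0 : ℂ) = ((-b * x ^ 2 + c * x : ℝ) : ℂ) by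
      push_cast; ring, ← Complex.ofReal_exp]
  simp only [h1] at h
  have h2 : ((π : ℂ) / -(-b : ℂ)) ^ (1 / 2 : ℂ) = ((Real.sqrt (π / b) : ℝ) : ℂ) := by
    rw [neg_neg, show ((π : ℂ) / (b : ℂ)) = ((π / b : ℝ) : ℂ) by push_cast; ring,
      show (1 / 2 : ℂ) = ((1 / 2 : ℝ) : ℂ) by norm_num,
      ← Complex.ofReal_cpow (by positivity), Real.sqrt_eq_rpow]
  have h3 : Complex.exp (0 - (c : ℂ) ^ 2 / (4 * (-b : ℂ)))
      = ((Real.exp (c ^ 2 / (4 * b)) : ℝ) : ℂ) := by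
    rw [show ((0 : ℂ) - (c:ℂ) ^ 2 / (4 * (-b : ℂ))) = ((c ^ 2 / (4 * b) : ℝ) : ℂ) by
      push_cast; ring, ← Complex.ofReal_exp]
  have key : ∫ x : ℝ, ((Real.exp (-b * x ^ 2 + c * x) : ℝ) : ℂ)
      = ((∫ x : ℝ, Real.exp (-b * x ^ 2 + c * x) : ℝ) : ℂ) := integral_ofReal
  rw [h2, h3, ← Complex.ofReal_mul, key] at h
  exact_mod_cast h

lemma my_kernel {a : ℝ} (ha : 0 ≤ a) (s : ℝ) :
    ∫⁻ u : ℝ, ENNReal.ofReal (Real.exp (Real.sqrt a * s * u - u ^ 2 / 2))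
      = ENNReal.ofReal (Real.sqrt (2 * π)) * ENNReal.ofReal (Real.exp (a * s ^ 2 / 2)) := by
  have hform : ∀ u : ℝ, Real.sqrt a * s * u - u ^ 2 / 2
      = -(1/2 : ℝ) * u ^ 2 + (Real.sqrt a * s) * u := by intro u; ring
  simp_rw [hform]
  rw [← ofReal_integral_eq_lintegral_ofReal (my_integrable_rexp_quadratic (by norm_num) _)
      (Filter.Eventually.of_forall fun u => (Real.exp_pos _).le),
    my_integral_rexp_quadratic (by norm_num : (0:ℝ) < 1/2),
    ENNReal.ofReal_mul (Real.sqrt_nonneg _)]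
  congr 2
  · rw [show π / (1/2 : ℝ) = 2 * π by ring]
  · rw [mul_pow, Real.sq_sqrt ha]; ring

lemma my_lintegral_pi_exp (μ : Measure ℝ) [IsProbabilityMeasure μ] (lam : ℝ) :
    ∀ l : ℕ, ∫⁻ z : Fin l → ℝ, ENNReal.ofReal (Real.exp (lam * ∑ i, z i))
      ∂(Measure.pi fun _ : Fin l => μ)
      = (∫⁻ x, ENNReal.ofReal (Real.exp (lam * x)) ∂μ) ^ l := by
  intro l
  induction l with
  | zero => simp
  | succ n ih =>
    have hmp := measurePreserving_piFinSuccAbove (fun _ : Fin (n + 1) => μ) 0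
    set e := MeasurableEquiv.piFinSuccAbove (fun _ : Fin (n + 1) => ℝ) 0 with he
    have emb := e.measurableEmbedding
    set F : ℝ × (Fin n → ℝ) → ℝ≥0∞ := fun p =>
      ENNReal.ofReal (Real.exp (lam * p.1)) * ENNReal.ofReal (Real.exp (lam * ∑ j, p.2 j))
      with hF
    have hcomp : ∀ z : Fin (n + 1) → ℝ,
        ENNReal.ofReal (Real.exp (lam * ∑ i, z i)) = F (e z) := by
      intro z
      have h1 : (e z).1 = z 0 := rfl
      have h2 : ∀ j : Fin n, (e z).2 j = z j.succ := by
        intro j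
        show z (Fin.succAbove 0 j) = z j.succ
        rw [Fin.zero_succAbove]
      simp only [hF, h1, h2, ← ENNReal.ofReal_mul (Real.exp_pos _).le, ← Real.exp_add,
        ← mul_add, ← Fin.sum_univ_succ]
    calc ∫⁻ z : Fin (n+1) → ℝ, ENNReal.ofReal (Real.exp (lam * ∑ i, z i))
          ∂(Measure.pi fun _ : Fin (n+1) => μ)
        = ∫⁻ z, F (e z) ∂(Measure.pi fun _ : Fin (n+1) => μ) := lintegral_congr hcomp
      _ = ∫⁻ p, F p ∂(μ.prod (Measure.pi fun _ : Fin n => μ)) :=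
          hmp.lintegral_comp_emb emb F
      _ = (∫⁻ x, ENNReal.ofReal (Real.exp (lam * x)) ∂μ)
            * ∫⁻ y : Fin n → ℝ, ENNReal.ofReal (Real.exp (lam * ∑ j, y j))
              ∂(Measure.pi fun _ : Fin n => μ) := by
          simp only [hF]
          exact lintegral_prod_mul (f := fun x : ℝ => ENNReal.ofReal (Real.exp (lam * x)))
            (g := fun y : Fin n → ℝ => ENNReal.ofReal (Real.exp (lam * ∑ j, y j)))
            (by fun_prop) (by fun_prop)
      _ = (∫⁻ x, ENNReal.ofReal (Real.exp (lam * x)) ∂μ) ^ (n + 1) := by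
          rw [ih, pow_succ']

/-- Sub-Gaussian case of Lemma 2. -/
theorem exp_moment_bound_of_block_average_subgaussian
    (μ : Measure ℝ) [IsProbabilityMeasure μ]
    (hmean : ∫ x, x ∂μ = 0)
    (C₂ : ℝ)
    (hΛ : ∀ lam : ℝ,
      ∫⁻ x, ENNReal.ofReal (Real.exp (lam * x)) ∂μ
        ≤ ENNReal.ofReal (Real.exp (C₂ * lam ^ 2 / 2)))
    (C₁ : ℝ) (G : ℝ → ℝ) (hG_meas : Measurable G)
    (hG_nonneg : ∀ x, 0 ≤ G x)
    (hG_bound : ∀ x, G x ≤ C₁ * (x ^ 2 / 2)) :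
    ∀ γ : ℝ, 0 < γ → γ < (C₁ * C₂)⁻¹ → ∀ l : ℕ, 1 ≤ l →
      ∫⁻ z : Fin l → ℝ,
          ENNReal.ofReal (Real.exp (γ * l * G ((∑ i, z i) / l)))
          ∂(Measure.pi fun _ : Fin l => μ)
        ≤ ENNReal.ofReal ((1 - γ * C₁ * C₂) ^ (-(1 : ℝ) / 2)) := by
  intro γ hγ0 hγlt l hl
  have hC₁C₂ : 0 < C₁ * C₂ := by
    by_contra hle
    push_neg at hle
    have : (C₁ * C₂)⁻¹ ≤ 0 := inv_nonpos.mpr hle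
    linarith
  have hC₁0 : 0 ≤ C₁ := by
    have h := (hG_nonneg 1).trans (hG_bound 1); nlinarith
  have hC₁ : 0 < C₁ := lt_of_le_of_ne hC₁0 (by
    rintro h
    rw [← h, zero_mul] at hC₁C₂
    exact lt_irrefl 0 hC₁C₂)
  have hC₂ : 0 < C₂ := by nlinarith
  have hl0 : (0:ℝ) < l := by
    have : (0:ℕ) < l := hl
    exact_mod_cast this
  set c := γ * C₁ * C₂ with hc
  have hc1 : c < 1 := by
    have h := mul_lt_mul_of_pos_right hγlt hC₁C₂
    rw [inv_mul_cancel₀ hC₁C₂.ne'] at h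
    calc c = γ * (C₁ * C₂) := by rw [hc, mul_assoc]
      _ < 1 := h
  have hc0 : 0 < c := by positivity
  set a := γ * C₁ / l with ha
  have ha0 : 0 < a := by positivity
  set S : (Fin l → ℝ) → ℝ := fun z => ∑ i, z i with hS
  set K := ENNReal.ofReal (Real.sqrt (2 * π)) with hK
  have hKpos : (0:ℝ) < Real.sqrt (2 * π) := Real.sqrt_pos.mpr (by positivity)
  have hK0 : K ≠ 0 := ne_of_gt (ENNReal.ofReal_pos.mpr hKpos)
  have hKtop : K ≠ ⊤ := ENNReal.ofReal_ne_top
  have step1 : ∫⁻ z : Fin l → ℝ,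
        ENNReal.ofReal (Real.exp (γ * l * G ((∑ i, z i) / l)))
        ∂(Measure.pi fun _ : Fin l => μ)
      ≤ ∫⁻ z : Fin l → ℝ, ENNReal.ofReal (Real.exp (a * (S z) ^ 2 / 2))
        ∂(Measure.pi fun _ : Fin l => μ) := by
    refine lintegral_mono fun z => ENNReal.ofReal_le_ofReal (Real.exp_le_exp.mpr ?_)
    have hb := hG_bound ((∑ i, z i) / l)
    have h1 : γ * l * G ((∑ i, z i) / l) ≤ γ * l * (C₁ * (((∑ i, z i) / l) ^ 2 / 2)) :=
      mul_le_mul_of_nonneg_left hb (by positivity)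
    refine h1.trans_eq ?_
    rw [hS, ha]
    field_simp
  refine step1.trans ?_
  rw [← ENNReal.mul_le_mul_iff_right hK0 hKtop]
  have hmeas : Measurable fun p : (Fin l → ℝ) × ℝ =>
      ENNReal.ofReal (Real.exp (Real.sqrt a * S p.1 * p.2 - p.2 ^ 2 / 2)) := by
    fun_prop
  have hswap : K * ∫⁻ z : Fin l → ℝ, ENNReal.ofReal (Real.exp (a * (S z) ^ 2 / 2))
        ∂(Measure.pi fun _ : Fin l => μ)
      = ∫⁻ u : ℝ, ∫⁻ z : Fin l → ℝ,
          ENNReal.ofReal (Real.exp (Real.sqrt a * S z * u - u ^ 2 / 2))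
          ∂(Measure.pi fun _ : Fin l => μ) := by
    calc K * ∫⁻ z, ENNReal.ofReal (Real.exp (a * (S z) ^ 2 / 2))
          ∂(Measure.pi fun _ : Fin l => μ)
        = ∫⁻ z, K * ENNReal.ofReal (Real.exp (a * (S z) ^ 2 / 2))
          ∂(Measure.pi fun _ : Fin l => μ) := (lintegral_const_mul' K _ hKtop).symm
      _ = ∫⁻ z, ∫⁻ u, ENNReal.ofReal (Real.exp (Real.sqrt a * S z * u - u ^ 2 / 2))
          ∂volume ∂(Measure.pi fun _ : Fin l => μ) :=
          lintegral_congr fun z => (my_kernel ha0.le (S z)).symm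
      _ = ∫⁻ u, ∫⁻ z, ENNReal.ofReal (Real.exp (Real.sqrt a * S z * u - u ^ 2 / 2))
          ∂(Measure.pi fun _ : Fin l => μ) ∂volume :=
          lintegral_lintegral_swap hmeas.aemeasurable
  rw [hswap]
  have inner : ∀ u : ℝ,
      ∫⁻ z : Fin l → ℝ, ENNReal.ofReal (Real.exp (Real.sqrt a * S z * u - u ^ 2 / 2))
        ∂(Measure.pi fun _ : Fin l => μ)
      ≤ ENNReal.ofReal (Real.exp ((c - 1) * u ^ 2 / 2)) := by
    intro u
    have hsplit : ∀ z : Fin l → ℝ, Real.sqrt a * S z * u - u ^ 2 / 2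
        = (-(u ^ 2 / 2)) + (Real.sqrt a * u) * S z := by intro z; ring
    calc ∫⁻ z, ENNReal.ofReal (Real.exp (Real.sqrt a * S z * u - u ^ 2 / 2))
          ∂(Measure.pi fun _ : Fin l => μ)
        = ∫⁻ z, ENNReal.ofReal (Real.exp (-(u ^ 2 / 2)))
            * ENNReal.ofReal (Real.exp ((Real.sqrt a * u) * S z))
          ∂(Measure.pi fun _ : Fin l => μ) := by
          refine lintegral_congr fun z => ?_
          rw [hsplit z, Real.exp_add, ENNReal.ofReal_mul (Real.exp_pos _).le]
      _ = ENNReal.ofReal (Real.exp (-(u ^ 2 / 2)))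
            * ∫⁻ z, ENNReal.ofReal (Real.exp ((Real.sqrt a * u) * S z))
            ∂(Measure.pi fun _ : Fin l => μ) :=
          lintegral_const_mul' _ _ ENNReal.ofReal_ne_top
      _ = ENNReal.ofReal (Real.exp (-(u ^ 2 / 2)))
            * (∫⁻ x, ENNReal.ofReal (Real.exp ((Real.sqrt a * u) * x)) ∂μ) ^ l := by
          rw [my_lintegral_pi_exp μ (Real.sqrt a * u) l]
      _ ≤ ENNReal.ofReal (Real.exp (-(u ^ 2 / 2)))
            * (ENNReal.ofReal (Real.exp (C₂ * (Real.sqrt a * u) ^ 2 / 2))) ^ l := by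
          gcongr
          exact hΛ (Real.sqrt a * u)
      _ = ENNReal.ofReal (Real.exp ((c - 1) * u ^ 2 / 2)) := by
          rw [← ENNReal.ofReal_pow (Real.exp_pos _).le, ← Real.exp_nat_mul,
            ← ENNReal.ofReal_mul (Real.exp_pos _).le, ← Real.exp_add]
          congr 1
          rw [mul_pow, Real.sq_sqrt ha0.le, ha, hc]
          field_simp
          ring
  refine (lintegral_mono inner).trans ?_
  have hpos : (0:ℝ) < (1 - c) / 2 := by linarith
  have hfin : ∫⁻ u : ℝ, ENNReal.ofReal (Real.exp ((c - 1) * u ^ 2 / 2))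
      = ENNReal.ofReal (Real.sqrt (π / ((1 - c) / 2))) := by
    have hform : ∀ u : ℝ, (c - 1) * u ^ 2 / 2 = -((1 - c) / 2) * u ^ 2 + 0 * u := by
      intro u; ring
    simp_rw [hform]
    rw [← ofReal_integral_eq_lintegral_ofReal (my_integrable_rexp_quadratic hpos 0)
        (Filter.Eventually.of_forall fun u => (Real.exp_pos _).le),
      my_integral_rexp_quadratic hpos 0]
    norm_num
  rw [hfin]
  have hsqrt : Real.sqrt (π / ((1 - c) / 2))
      = Real.sqrt (2 * π) * (1 - c) ^ (-(1:ℝ) / 2) := by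
    rw [div_div_eq_mul_div, mul_comm π 2,
      Real.sqrt_div (by positivity) (1 - c),
      show (-(1:ℝ) / 2) = -(1/2 : ℝ) by ring,
      Real.rpow_neg (by linarith : (0:ℝ) ≤ 1 - c), ← Real.sqrt_eq_rpow,
      div_eq_mul_inv]
  rw [hsqrt, ENNReal.ofReal_mul (Real.sqrt_nonneg _), ← hK]
end

section
/- Dirichlet form convexity inequality. For every N ∈ ℕ, every l with 2 ≤ l ≤ N, and every probability measure μ on Ω^N with density h^N = dμ/dπ^N, letting h^{N,l,j} denote the density with respect to π^l of the marginal of μ on the window (z_j, z_{j+1}, …, z_{j+l−1}) (indices mod N), one has D^N(√(h^N)) ≥ (1/l) Σ_{j∈T^N} D^l(√(h^{N,l,j})). -/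
open Real
open scoped BigOperators Classical

noncomputable section

/-- The single-site spin space `S = [z_min, z_max] ∩ ℤ`. -/
abbrev Spin (zmin zmax : ℤ) := {x : ℤ // x ∈ Finset.Icc zmin zmax}

/-- The exchange move `Θ`: move one unit from site `a` to site `b`
(if possible; otherwise do nothing). -/
def moveB {zmin zmax : ℤ} {ι : Type*} [DecidableEq ι] (a b : ι)
    (z : ι → Spin zmin zmax) : ι → Spin zmin zmax :=
  if h : zmin < (z a : ℤ) ∧ (z b : ℤ) < zmax then
    fun i =>
      ⟨(z i : ℤ) - (if i = a then 1 else 0) + (if i = b then 1 else 0), by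
        obtain ⟨h1, h2⟩ := h
        have hz := Finset.mem_Icc.mp (z i).2
        rw [Finset.mem_Icc]
        by_cases hia : i = a <;> by_cases hib : i = b <;> subst_vars <;> simp_all <;> omega⟩
  else z

/-- Product measure on configurations indexed by a fintype. -/
def prodMeas {zmin zmax : ℤ} {ι : Type*} [Fintype ι] (ρ : ℤ → ℝ)
    (z : ι → Spin zmin zmax) : ℝ :=
  ∏ i, ρ (z i)

/-- Dirichlet form on the torus (periodic boundary conditions). -/
def dirichletN (zmin zmax : ℤ) (c : ℤ → ℤ → ℝ) (ρ : ℤ → ℝ) (N : ℕ) [NeZero N]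
    (f : (ZMod N → Spin zmin zmax) → ℝ) : ℝ :=
  (1 / 2) * ∑ j : ZMod N, ∑ z : ZMod N → Spin zmin zmax,
    prodMeas ρ z * c (z j) (z (j + 1)) * (f (moveB j (j + 1) z) - f z) ^ 2

open Fin.NatCast in
/-- Dirichlet form on a block of length `l` (free boundary conditions). -/
def dirichletL (zmin zmax : ℤ) (c : ℤ → ℤ → ℝ) (ρ : ℤ → ℝ) (l : ℕ) [NeZero l]
    (g : (Fin l → Spin zmin zmax) → ℝ) : ℝ :=
  (1 / 2) * ∑ i ∈ Finset.range (l - 1), ∑ y : Fin l → Spin zmin zmax,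
    prodMeas ρ y * c (y ((i : ℕ) : Fin l)) (y (((i + 1 : ℕ)) : Fin l)) *
      (g (moveB ((i : ℕ) : Fin l) (((i + 1 : ℕ)) : Fin l) y) - g y) ^ 2

/-- The marginal of `μ` on the window `(z_j, …, z_{j+l-1})`. -/
def windowMarginal (zmin zmax : ℤ) (N : ℕ) [NeZero N] (l : ℕ)
    (μ : (ZMod N → Spin zmin zmax) → ℝ) (j : ZMod N)
    (y : Fin l → Spin zmin zmax) : ℝ :=
  ∑ z ∈ Finset.univ.filter
      (fun z : ZMod N → Spin zmin zmax => ∀ i : Fin l, z (j + ((i : ℕ) : ZMod N)) = y i),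
    μ z

/-! ### Auxiliary lemmas -/

section AuxLemmas

variable {zmin zmax : ℤ}

lemma aux_sqrt_sub_sq_sum_le {ι : Type*} (s : Finset ι) (u v : ι → ℝ)
    (hu : ∀ i ∈ s, 0 ≤ u i) (hv : ∀ i ∈ s, 0 ≤ v i) :
    (Real.sqrt (∑ i ∈ s, u i) - Real.sqrt (∑ i ∈ s, v i)) ^ 2
      ≤ ∑ i ∈ s, (Real.sqrt (u i) - Real.sqrt (v i)) ^ 2 := by
  have hU : 0 ≤ ∑ i ∈ s, u i := Finset.sum_nonneg hu
  have hV : 0 ≤ ∑ i ∈ s, v i := Finset.sum_nonneg hv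
  have hCS : (∑ i ∈ s, Real.sqrt (u i) * Real.sqrt (v i)) ^ 2
      ≤ (∑ i ∈ s, u i) * (∑ i ∈ s, v i) := by
    have h := Finset.sum_mul_sq_le_sq_mul_sq s (fun i => Real.sqrt (u i))
      (fun i => Real.sqrt (v i))
    have h1 : ∑ i ∈ s, Real.sqrt (u i) ^ 2 = ∑ i ∈ s, u i :=
      Finset.sum_congr rfl fun i hi => Real.sq_sqrt (hu i hi)
    have h2 : ∑ i ∈ s, Real.sqrt (v i) ^ 2 = ∑ i ∈ s, v i :=
      Finset.sum_congr rfl fun i hi => Real.sq_sqrt (hv i hi)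
    calc (∑ i ∈ s, Real.sqrt (u i) * Real.sqrt (v i)) ^ 2
        ≤ (∑ i ∈ s, Real.sqrt (u i) ^ 2) * (∑ i ∈ s, Real.sqrt (v i) ^ 2) := h
      _ = (∑ i ∈ s, u i) * (∑ i ∈ s, v i) := by rw [h1, h2]
  have hsum_nonneg : 0 ≤ ∑ i ∈ s, Real.sqrt (u i) * Real.sqrt (v i) :=
    Finset.sum_nonneg fun i hi => mul_nonneg (Real.sqrt_nonneg _) (Real.sqrt_nonneg _)
  have h2 : ∑ i ∈ s, Real.sqrt (u i) * Real.sqrt (v i)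
      ≤ Real.sqrt (∑ i ∈ s, u i) * Real.sqrt (∑ i ∈ s, v i) := by
    rw [← Real.sqrt_mul hU]
    exact (Real.le_sqrt hsum_nonneg (mul_nonneg hU hV)).mpr hCS
  have hterm : ∀ i ∈ s, (Real.sqrt (u i) - Real.sqrt (v i)) ^ 2
      = u i + v i - 2 * (Real.sqrt (u i) * Real.sqrt (v i)) := by
    intro i hi
    rw [sub_sq, Real.sq_sqrt (hu i hi), Real.sq_sqrt (hv i hi)]; ring
  calc (Real.sqrt (∑ i ∈ s, u i) - Real.sqrt (∑ i ∈ s, v i)) ^ 2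
      = (∑ i ∈ s, u i) + (∑ i ∈ s, v i)
        - 2 * (Real.sqrt (∑ i ∈ s, u i) * Real.sqrt (∑ i ∈ s, v i)) := by
        rw [sub_sq, Real.sq_sqrt hU, Real.sq_sqrt hV]; ring
    _ ≤ (∑ i ∈ s, u i) + (∑ i ∈ s, v i)
        - 2 * ∑ i ∈ s, Real.sqrt (u i) * Real.sqrt (v i) := by linarith
    _ = ∑ i ∈ s, (u i + v i - 2 * (Real.sqrt (u i) * Real.sqrt (v i))) := by
        rw [Finset.sum_sub_distrib, Finset.sum_add_distrib, Finset.mul_sum]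
    _ = ∑ i ∈ s, (Real.sqrt (u i) - Real.sqrt (v i)) ^ 2 :=
        (Finset.sum_congr rfl hterm).symm

lemma moveB_coord {ι : Type*} [DecidableEq ι] (a b : ι) (z : ι → Spin zmin zmax)
    (i : ι) (h : zmin < (z a : ℤ) ∧ (z b : ℤ) < zmax) :
    (moveB a b z i : ℤ)
      = (z i : ℤ) - (if i = a then 1 else 0) + (if i = b then 1 else 0) := by
  unfold moveB; rw [dif_pos h]

lemma moveB_neg {ι : Type*} [DecidableEq ι] (a b : ι) (z : ι → Spin zmin zmax)
    (h : ¬(zmin < (z a : ℤ) ∧ (z b : ℤ) < zmax)) : moveB a b z = z := dif_neg h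

lemma moveB_apply_ne {ι : Type*} [DecidableEq ι] (a b : ι) (z : ι → Spin zmin zmax)
    (i : ι) (hia : i ≠ a) (hib : i ≠ b) : moveB a b z i = z i := by
  unfold moveB; split
  · exact Subtype.ext (by simp [hia, hib])
  · rfl

lemma moveB_moveB {ι : Type*} [DecidableEq ι] (a b : ι) (hab : a ≠ b)
    (z : ι → Spin zmin zmax) (h : zmin < (z a : ℤ) ∧ (z b : ℤ) < zmax) :
    moveB b a (moveB a b z) = z := by
  have h2 : zmin < ((moveB a b z) b : ℤ) ∧ ((moveB a b z) a : ℤ) < zmax := by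
    rw [moveB_coord a b z b h, moveB_coord a b z a h]
    have hb := Finset.mem_Icc.mp (z b).2
    have ha := Finset.mem_Icc.mp (z a).2
    constructor
    · have : (if b = a then (1:ℤ) else 0) = 0 := if_neg (Ne.symm hab)
      rw [this, if_pos rfl]; omega
    · have : (if a = b then (1:ℤ) else 0) = 0 := if_neg hab
      rw [this, if_pos rfl]; omega
  funext i; apply Subtype.ext
  rw [moveB_coord b a _ i h2, moveB_coord a b z i h]
  ring

lemma moveB_comp {ι κ : Type*} [DecidableEq ι] [DecidableEq κ] (e : κ → ι)
    (he : Function.Injective e) (a b : κ) (z : ι → Spin zmin zmax) :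
    (fun k => moveB (e a) (e b) z (e k)) = moveB a b (fun k => z (e k)) := by
  by_cases h : zmin < (z (e a) : ℤ) ∧ (z (e b) : ℤ) < zmax
  · funext k; apply Subtype.ext
    rw [moveB_coord (e a) (e b) z (e k) h, moveB_coord a b _ k h]
    simp [he.eq_iff]
  · simp only [moveB, dif_neg h]

lemma prodMeas_pos {ι : Type*} [Fintype ι] {ρ : ℤ → ℝ}
    (hρ : ∀ x ∈ Finset.Icc zmin zmax, 0 < ρ x) (z : ι → Spin zmin zmax) :
    0 < prodMeas ρ z :=
  Finset.prod_pos fun i _ => hρ _ (z i).2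

lemma prodMeas_window {ι κ : Type*} [Fintype ι] [Fintype κ] [DecidableEq ι]
    (ρ : ℤ → ℝ) (e : κ → ι) (he : Function.Injective e) (z : ι → Spin zmin zmax) :
    prodMeas ρ z = prodMeas ρ (fun k => z (e k))
      * ∏ i ∈ Finset.univ \ Finset.univ.image e, ρ (z i) := by
  have h1 : prodMeas ρ (fun k => z (e k)) = ∏ i ∈ Finset.univ.image e, ρ (z i) := by
    rw [Finset.prod_image (fun x _ y _ h => he h)]; rfl
  rw [h1, mul_comm, Finset.prod_sdiff (Finset.subset_univ _)]
  rfl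

end AuxLemmas

open Fin.NatCast in
/-- Per-bond comparison: the window Dirichlet summand is dominated by the
corresponding torus Dirichlet summand. -/
lemma bond_le (zmin zmax : ℤ) (c : ℤ → ℤ → ℝ)
    (hc_nonneg : ∀ x ∈ Finset.Icc zmin zmax, ∀ y ∈ Finset.Icc zmin zmax, 0 ≤ c x y)
    (ρ : ℤ → ℝ) (hρ_pos : ∀ x ∈ Finset.Icc zmin zmax, 0 < ρ x)
    (N : ℕ) [NeZero N] (l : ℕ) [NeZero l] (hlN : l ≤ N)
    (μ : (ZMod N → Spin zmin zmax) → ℝ) (hμ_nonneg : ∀ z, 0 ≤ μ z)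
    (j : ZMod N) (i : ℕ) (hi : i + 1 < l) :
    ∑ y : Fin l → Spin zmin zmax,
      prodMeas ρ y * c (y ((i : ℕ) : Fin l)) (y (((i + 1 : ℕ)) : Fin l)) *
        (Real.sqrt (windowMarginal zmin zmax N l μ j
            (moveB ((i : ℕ) : Fin l) (((i + 1 : ℕ)) : Fin l) y)
            / prodMeas ρ (moveB ((i : ℕ) : Fin l) (((i + 1 : ℕ)) : Fin l) y))
          - Real.sqrt (windowMarginal zmin zmax N l μ j y / prodMeas ρ y)) ^ 2
    ≤ ∑ z : ZMod N → Spin zmin zmax,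
      prodMeas ρ z * c (z (j + (i : ZMod N))) (z (j + (i : ZMod N) + 1)) *
        (Real.sqrt (μ (moveB (j + (i : ZMod N)) (j + (i : ZMod N) + 1) z)
            / prodMeas ρ (moveB (j + (i : ZMod N)) (j + (i : ZMod N) + 1) z))
          - Real.sqrt (μ z / prodMeas ρ z)) ^ 2 := by
  classical
  have hil : i < l := Nat.lt_of_succ_lt hi
  set a : Fin l := ((i : ℕ) : Fin l) with ha_def
  set b : Fin l := (((i + 1 : ℕ)) : Fin l) with hb_def
  have hav : (a : ℕ) = i := Fin.val_cast_of_lt hil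
  have hbv : (b : ℕ) = i + 1 := Fin.val_cast_of_lt hi
  have hab : a ≠ b := by
    intro h
    have : (a : ℕ) = (b : ℕ) := by rw [h]
    omega
  set e : Fin l → ZMod N := fun k => j + ((k : ℕ) : ZMod N) with he_def
  have he : Function.Injective e := by
    intro k1 k2 h
    have h1 : (((k1 : ℕ)) : ZMod N) = (((k2 : ℕ)) : ZMod N) := by
      have := h
      simp only [he_def] at this
      exact add_left_cancel this
    have h2 := (ZMod.natCast_eq_natCast_iff _ _ _).mp h1
    have h3 : (k1 : ℕ) % N = (k2 : ℕ) % N := h2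
    have hk1 : (k1 : ℕ) < N := lt_of_lt_of_le k1.2 hlN
    have hk2 : (k2 : ℕ) < N := lt_of_lt_of_le k2.2 hlN
    rw [Nat.mod_eq_of_lt hk1, Nat.mod_eq_of_lt hk2] at h3
    exact Fin.ext h3
  set A : ZMod N := j + (i : ZMod N) with hA_def
  have heA : e a = A := by simp only [he_def, hA_def, hav]
  have heB : e b = A + 1 := by
    simp only [he_def, hbv, hA_def]
    push_cast
    ring
  set w : (ZMod N → Spin zmin zmax) → (Fin l → Spin zmin zmax) :=
    fun z k => z (e k) with hw_def
  have hmarg : ∀ y, windowMarginal zmin zmax N l μ j y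
      = ∑ z ∈ Finset.univ.filter (fun z => w z = y), μ z := by
    intro y
    unfold windowMarginal
    congr 1
    ext z
    simp [hw_def, he_def, funext_iff]
  -- rewrite RHS as a sum over fibers
  rw [← Finset.sum_fiberwise Finset.univ w
    (fun z => prodMeas ρ z * c (z A) (z (A + 1)) *
      (Real.sqrt (μ (moveB A (A + 1) z) / prodMeas ρ (moveB A (A + 1) z))
        - Real.sqrt (μ z / prodMeas ρ z)) ^ 2)]
  apply Finset.sum_le_sum
  intro y _
  set Sy := Finset.univ.filter (fun z => w z = y) with hSy_def
  have hfiber : ∀ z ∈ Sy, w z = y := by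
    intro z hz; exact (Finset.mem_filter.mp hz).2
  have hzA : ∀ z ∈ Sy, z A = y a := by
    intro z hz; rw [← heA]; exact congrFun (hfiber z hz) a
  have hzB : ∀ z ∈ Sy, z (A + 1) = y b := by
    intro z hz; rw [← heB]; exact congrFun (hfiber z hz) b
  have hRHS_nonneg : ∀ z ∈ Sy, 0 ≤ prodMeas ρ z * c (z A) (z (A + 1)) *
      (Real.sqrt (μ (moveB A (A + 1) z) / prodMeas ρ (moveB A (A + 1) z))
        - Real.sqrt (μ z / prodMeas ρ z)) ^ 2 := by
    intro z _
    exact mul_nonneg (mul_nonneg (prodMeas_pos hρ_pos z).le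
      (hc_nonneg _ (z A).2 _ (z (A + 1)).2)) (sq_nonneg _)
  by_cases hmv : zmin < (y a : ℤ) ∧ (y b : ℤ) < zmax
  · -- move possible
    have hABne : A ≠ A + 1 := fun h => hab (he (by rw [heA, heB]; exact h))
    have hmvz : ∀ z ∈ Sy, zmin < (z A : ℤ) ∧ (z (A + 1) : ℤ) < zmax := by
      intro z hz; rw [hzA z hz, hzB z hz]; exact hmv
    -- commutation
    have hcomm : ∀ z ∈ Sy, w (moveB A (A + 1) z) = moveB a b y := by
      intro z hz
      have := moveB_comp e he a b z
      rw [heA, heB] at this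
      calc w (moveB A (A + 1) z) = (fun k => moveB A (A + 1) z (e k)) := rfl
        _ = moveB a b (fun k => z (e k)) := this
        _ = moveB a b y := by rw [show (fun k => z (e k)) = w z from rfl, hfiber z hz]
    -- spectator product identity
    have hR : ∀ z ∈ Sy,
        (∏ k ∈ Finset.univ \ Finset.univ.image e, ρ (moveB A (A + 1) z k))
          = ∏ k ∈ Finset.univ \ Finset.univ.image e, ρ (z k) := by
      intro z hz
      apply Finset.prod_congr rfl
      intro k hk
      have hk' := Finset.mem_sdiff.mp hk
      have hkA : k ≠ A := by
        intro h; exact hk'.2 (Finset.mem_image.mpr ⟨a, Finset.mem_univ a, by rw [heA, h]⟩)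
      have hkB : k ≠ A + 1 := by
        intro h; exact hk'.2 (Finset.mem_image.mpr ⟨b, Finset.mem_univ b, by rw [heB, h]⟩)
      rw [moveB_apply_ne A (A + 1) z k hkA hkB]
    have hq_split : ∀ z ∈ Sy, prodMeas ρ z
        = prodMeas ρ y * ∏ k ∈ Finset.univ \ Finset.univ.image e, ρ (z k) := by
      intro z hz
      rw [prodMeas_window ρ e he z]
      congr 1
      rw [show (fun k => z (e k)) = w z from rfl, hfiber z hz]
    have hq_split' : ∀ z ∈ Sy, prodMeas ρ (moveB A (A + 1) z)
        = prodMeas ρ (moveB a b y)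
          * ∏ k ∈ Finset.univ \ Finset.univ.image e, ρ (z k) := by
      intro z hz
      rw [prodMeas_window ρ e he (moveB A (A + 1) z)]
      rw [show (fun k => moveB A (A + 1) z (e k)) = w (moveB A (A + 1) z) from rfl,
        hcomm z hz, hR z hz]
    -- positivity facts
    have hp : 0 < prodMeas ρ y := prodMeas_pos hρ_pos y
    have hp' : 0 < prodMeas ρ (moveB a b y) := prodMeas_pos hρ_pos _
    have hRpos : ∀ z : ZMod N → Spin zmin zmax,
        0 < ∏ k ∈ Finset.univ \ Finset.univ.image e, ρ (z k) :=
      fun z => Finset.prod_pos fun k _ => hρ_pos _ (z k).2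
    have hratio : ∀ z ∈ Sy, prodMeas ρ z / prodMeas ρ (moveB A (A + 1) z)
        = prodMeas ρ y / prodMeas ρ (moveB a b y) := by
      intro z hz
      rw [hq_split z hz, hq_split' z hz,
        mul_div_mul_right _ _ (hRpos z).ne']
    -- the marginal of the moved configuration
    set u : (ZMod N → Spin zmin zmax) → ℝ := fun z =>
      μ (moveB A (A + 1) z) * (prodMeas ρ y / prodMeas ρ (moveB a b y)) with hu_def
    have hmove_inv : ∀ z ∈ Sy, moveB (A + 1) A (moveB A (A + 1) z) = z := by
      intro z hz
      exact moveB_moveB A (A + 1) hABne z (hmvz z hz)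
    have hsum_u : ∑ z ∈ Sy, u z
        = windowMarginal zmin zmax N l μ j (moveB a b y)
          * (prodMeas ρ y / prodMeas ρ (moveB a b y)) := by
      rw [hmarg, ← Finset.sum_mul]
      congr 1
      -- ∑_{z ∈ Sy} μ (moveB A (A+1) z) = ∑_{z ∈ fiber (moveB a b y)} μ z
      refine Finset.sum_nbij' (fun z => moveB A (A + 1) z) (fun z => moveB (A + 1) A z)
        ?_ ?_ ?_ ?_ ?_
      · intro z hz
        simp only [Finset.mem_filter, Finset.mem_univ, true_and]
        exact hcomm z hz
      · intro z' hz'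
        have hz'w : w z' = moveB a b y := (Finset.mem_filter.mp hz').2
        -- coordinates of z' at A, A+1
        have hz'A : z' A = moveB a b y a := by rw [← heA]; exact congrFun hz'w a
        have hz'B : z' (A + 1) = moveB a b y b := by rw [← heB]; exact congrFun hz'w b
        have hya := Finset.mem_Icc.mp (y a).2
        have hyb := Finset.mem_Icc.mp (y b).2
        have hcA : (moveB a b y a : ℤ) = (y a : ℤ) - 1 := by
          rw [moveB_coord a b y a hmv]
          simp [hab]
        have hcB : (moveB a b y b : ℤ) = (y b : ℤ) + 1 := by
          rw [moveB_coord a b y b hmv]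
          simp [Ne.symm hab]
        have hmv' : zmin < (z' (A + 1) : ℤ) ∧ (z' A : ℤ) < zmax := by
          rw [hz'A, hz'B, hcA, hcB]
          omega
        simp only [hSy_def, Finset.mem_filter, Finset.mem_univ, true_and]
        -- w (moveB (A+1) A z') = moveB b a (w z') = moveB b a (moveB a b y) = y
        have hcm := moveB_comp e he b a z'
        rw [heA, heB] at hcm
        calc w (moveB (A + 1) A z') = (fun k => moveB (A + 1) A z' (e k)) := rfl
          _ = moveB b a (fun k => z' (e k)) := hcm
          _ = moveB b a (moveB a b y) := by
              rw [show (fun k => z' (e k)) = w z' from rfl, hz'w]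
          _ = y := moveB_moveB a b hab y hmv
      · exact hmove_inv
      · intro z' hz'
        have hz'w : w z' = moveB a b y := (Finset.mem_filter.mp hz').2
        have hz'A : z' A = moveB a b y a := by rw [← heA]; exact congrFun hz'w a
        have hz'B : z' (A + 1) = moveB a b y b := by rw [← heB]; exact congrFun hz'w b
        have hya := Finset.mem_Icc.mp (y a).2
        have hyb := Finset.mem_Icc.mp (y b).2
        have hcA : (moveB a b y a : ℤ) = (y a : ℤ) - 1 := by
          rw [moveB_coord a b y a hmv]; simp [hab]
        have hcB : (moveB a b y b : ℤ) = (y b : ℤ) + 1 := by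
          rw [moveB_coord a b y b hmv]; simp [Ne.symm hab]
        have hmv' : zmin < (z' (A + 1) : ℤ) ∧ (z' A : ℤ) < zmax := by
          rw [hz'A, hz'B, hcA, hcB]; omega
        exact moveB_moveB (A + 1) A (Ne.symm hABne) z' hmv'
      · intro z hz; rfl
    have hsum_v : ∑ z ∈ Sy, μ z = windowMarginal zmin zmax N l μ j y := by
      rw [hmarg]
    -- nonnegativity of u, v
    have hu_nonneg : ∀ z ∈ Sy, 0 ≤ u z := fun z _ =>
      mul_nonneg (hμ_nonneg _) (div_nonneg hp.le hp'.le)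
    have hm_nonneg : ∀ y', 0 ≤ windowMarginal zmin zmax N l μ j y' := by
      intro y'; exact Finset.sum_nonneg fun z _ => hμ_nonneg z
    -- pointwise identity on the fiber
    have hz_id : ∀ z ∈ Sy,
        prodMeas ρ z * c (z A) (z (A + 1)) *
          (Real.sqrt (μ (moveB A (A + 1) z) / prodMeas ρ (moveB A (A + 1) z))
            - Real.sqrt (μ z / prodMeas ρ z)) ^ 2
        = c (y a) (y b) * (Real.sqrt (u z) - Real.sqrt (μ z)) ^ 2 := by
      intro z hz
      have hq : 0 < prodMeas ρ z := prodMeas_pos hρ_pos z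
      have hq' : 0 < prodMeas ρ (moveB A (A + 1) z) := prodMeas_pos hρ_pos _
      have hsq : Real.sqrt (prodMeas ρ z) ^ 2 = prodMeas ρ z := Real.sq_sqrt hq.le
      have hX : Real.sqrt (μ (moveB A (A + 1) z) / prodMeas ρ (moveB A (A + 1) z))
          * Real.sqrt (prodMeas ρ z) = Real.sqrt (u z) := by
        rw [← Real.sqrt_mul (div_nonneg (hμ_nonneg _) hq'.le)]
        congr 1
        rw [hu_def]
        simp only
        rw [← hratio z hz]
        ring
      have hY : Real.sqrt (μ z / prodMeas ρ z) * Real.sqrt (prodMeas ρ z)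
          = Real.sqrt (μ z) := by
        rw [← Real.sqrt_mul (div_nonneg (hμ_nonneg _) hq.le),
          div_mul_cancel₀ _ hq.ne']
      rw [hzA z hz, hzB z hz]
      calc prodMeas ρ z * c (y a) (y b) *
          (Real.sqrt (μ (moveB A (A + 1) z) / prodMeas ρ (moveB A (A + 1) z))
            - Real.sqrt (μ z / prodMeas ρ z)) ^ 2
          = c (y a) (y b) *
            (Real.sqrt (μ (moveB A (A + 1) z) / prodMeas ρ (moveB A (A + 1) z))
              * Real.sqrt (prodMeas ρ z)
             - Real.sqrt (μ z / prodMeas ρ z) * Real.sqrt (prodMeas ρ z)) ^ 2 := by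
            have h' : (Real.sqrt (μ (moveB A (A + 1) z) / prodMeas ρ (moveB A (A + 1) z))
                  * Real.sqrt (prodMeas ρ z)
                - Real.sqrt (μ z / prodMeas ρ z) * Real.sqrt (prodMeas ρ z)) ^ 2
                = (Real.sqrt (μ (moveB A (A + 1) z) / prodMeas ρ (moveB A (A + 1) z))
                  - Real.sqrt (μ z / prodMeas ρ z)) ^ 2 * prodMeas ρ z := by
              rw [← sub_mul, mul_pow, Real.sq_sqrt hq.le]
            rw [h']; ring
        _ = c (y a) (y b) * (Real.sqrt (u z) - Real.sqrt (μ z)) ^ 2 := by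
            rw [hX, hY]
    -- LHS identity
    have hL : prodMeas ρ y * c (y a) (y b) *
        (Real.sqrt (windowMarginal zmin zmax N l μ j (moveB a b y)
            / prodMeas ρ (moveB a b y))
          - Real.sqrt (windowMarginal zmin zmax N l μ j y / prodMeas ρ y)) ^ 2
        = c (y a) (y b) * (Real.sqrt (∑ z ∈ Sy, u z)
            - Real.sqrt (∑ z ∈ Sy, μ z)) ^ 2 := by
      have hsq : Real.sqrt (prodMeas ρ y) ^ 2 = prodMeas ρ y := Real.sq_sqrt hp.le
      have hX : Real.sqrt (windowMarginal zmin zmax N l μ j (moveB a b y)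
            / prodMeas ρ (moveB a b y)) * Real.sqrt (prodMeas ρ y)
          = Real.sqrt (∑ z ∈ Sy, u z) := by
        rw [← Real.sqrt_mul (div_nonneg (hm_nonneg _) hp'.le)]
        congr 1
        rw [hsum_u]
        ring
      have hY : Real.sqrt (windowMarginal zmin zmax N l μ j y / prodMeas ρ y)
          * Real.sqrt (prodMeas ρ y) = Real.sqrt (∑ z ∈ Sy, μ z) := by
        rw [← Real.sqrt_mul (div_nonneg (hm_nonneg _) hp.le),
          div_mul_cancel₀ _ hp.ne', hsum_v]
      calc prodMeas ρ y * c (y a) (y b) *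
          (Real.sqrt (windowMarginal zmin zmax N l μ j (moveB a b y)
              / prodMeas ρ (moveB a b y))
            - Real.sqrt (windowMarginal zmin zmax N l μ j y / prodMeas ρ y)) ^ 2
          = c (y a) (y b) *
            (Real.sqrt (windowMarginal zmin zmax N l μ j (moveB a b y)
                / prodMeas ρ (moveB a b y)) * Real.sqrt (prodMeas ρ y)
              - Real.sqrt (windowMarginal zmin zmax N l μ j y / prodMeas ρ y)
                * Real.sqrt (prodMeas ρ y)) ^ 2 := by
            have h' : (Real.sqrt (windowMarginal zmin zmax N l μ j (moveB a b y)
                    / prodMeas ρ (moveB a b y)) * Real.sqrt (prodMeas ρ y)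
                - Real.sqrt (windowMarginal zmin zmax N l μ j y / prodMeas ρ y)
                  * Real.sqrt (prodMeas ρ y)) ^ 2
                = (Real.sqrt (windowMarginal zmin zmax N l μ j (moveB a b y)
                    / prodMeas ρ (moveB a b y))
                  - Real.sqrt (windowMarginal zmin zmax N l μ j y / prodMeas ρ y)) ^ 2
                  * prodMeas ρ y := by
              rw [← sub_mul, mul_pow, Real.sq_sqrt hp.le]
            rw [h']; ring
        _ = c (y a) (y b) * (Real.sqrt (∑ z ∈ Sy, u z)
              - Real.sqrt (∑ z ∈ Sy, μ z)) ^ 2 := by rw [hX, hY]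
    rw [hL]
    calc c (y a) (y b) * (Real.sqrt (∑ z ∈ Sy, u z) - Real.sqrt (∑ z ∈ Sy, μ z)) ^ 2
        ≤ c (y a) (y b) * ∑ z ∈ Sy, (Real.sqrt (u z) - Real.sqrt (μ z)) ^ 2 := by
          apply mul_le_mul_of_nonneg_left
            (aux_sqrt_sub_sq_sum_le Sy u μ hu_nonneg fun z _ => hμ_nonneg z)
            (hc_nonneg _ (y a).2 _ (y b).2)
      _ = ∑ z ∈ Sy, c (y a) (y b) * (Real.sqrt (u z) - Real.sqrt (μ z)) ^ 2 :=
          Finset.mul_sum _ _ _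
      _ = ∑ z ∈ Sy, prodMeas ρ z * c (z A) (z (A + 1)) *
            (Real.sqrt (μ (moveB A (A + 1) z) / prodMeas ρ (moveB A (A + 1) z))
              - Real.sqrt (μ z / prodMeas ρ z)) ^ 2 :=
          Finset.sum_congr rfl fun z hz => (hz_id z hz).symm
  · -- move impossible: LHS is zero
    rw [moveB_neg a b y hmv]
    simp only [sub_self]
    rw [zero_pow (by norm_num), mul_zero]
    exact Finset.sum_nonneg hRHS_nonneg

/-- Dirichlet form convexity inequality. -/
theorem dirichlet_form_convexity
    (zmin zmax : ℤ) (hzz : zmin < zmax)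
    (c : ℤ → ℤ → ℝ)
    (hc_nonneg : ∀ x ∈ Finset.Icc zmin zmax, ∀ y ∈ Finset.Icc zmin zmax, 0 ≤ c x y)
    (ρ : ℤ → ℝ) (hρ_pos : ∀ x ∈ Finset.Icc zmin zmax, 0 < ρ x)
    (hρ_sum : ∑ x ∈ Finset.Icc zmin zmax, ρ x = 1)
    (N : ℕ) [NeZero N] (l : ℕ) [NeZero l] (hl : 2 ≤ l) (hlN : l ≤ N)
    (μ : (ZMod N → Spin zmin zmax) → ℝ)
    (hμ_nonneg : ∀ z, 0 ≤ μ z) (hμ_sum : ∑ z, μ z = 1) :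
    dirichletN zmin zmax c ρ N (fun z => Real.sqrt (μ z / prodMeas ρ z))
      ≥ (1 / (l : ℝ)) * ∑ j : ZMod N,
          dirichletL zmin zmax c ρ l
            (fun y => Real.sqrt (windowMarginal zmin zmax N l μ j y / prodMeas ρ y)) := by
  classical
  -- torus bond term
  set T : ZMod N → ℝ := fun k => ∑ z : ZMod N → Spin zmin zmax,
    prodMeas ρ z * c (z k) (z (k + 1)) *
      (Real.sqrt (μ (moveB k (k + 1) z) / prodMeas ρ (moveB k (k + 1) z))
        - Real.sqrt (μ z / prodMeas ρ z)) ^ 2 with hT_def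
  have hT_nonneg : ∀ k, 0 ≤ T k := by
    intro k
    apply Finset.sum_nonneg
    intro z _
    exact mul_nonneg (mul_nonneg (prodMeas_pos hρ_pos z).le
      (hc_nonneg _ (z k).2 _ (z (k + 1)).2)) (sq_nonneg _)
  -- window bond term
  open Fin.NatCast in
  set S : ZMod N → ℕ → ℝ := fun j i => ∑ y : Fin l → Spin zmin zmax,
    prodMeas ρ y * c (y ((i : ℕ) : Fin l)) (y (((i + 1 : ℕ)) : Fin l)) *
      (Real.sqrt (windowMarginal zmin zmax N l μ j
          (moveB ((i : ℕ) : Fin l) (((i + 1 : ℕ)) : Fin l) y)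
          / prodMeas ρ (moveB ((i : ℕ) : Fin l) (((i + 1 : ℕ)) : Fin l) y))
        - Real.sqrt (windowMarginal zmin zmax N l μ j y / prodMeas ρ y)) ^ 2
    with hS_def
  have hbond : ∀ j : ZMod N, ∀ i ∈ Finset.range (l - 1), S j i ≤ T (j + (i : ZMod N)) :=
    fun j i hi => bond_le zmin zmax c hc_nonneg ρ hρ_pos N l hlN μ hμ_nonneg j i
      (by have := Finset.mem_range.mp hi; omega)
  have hsum1 : ∑ j : ZMod N, ∑ i ∈ Finset.range (l - 1), S j i
      ≤ ((l : ℝ) - 1) * ∑ k : ZMod N, T k := by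
    calc ∑ j : ZMod N, ∑ i ∈ Finset.range (l - 1), S j i
        ≤ ∑ j : ZMod N, ∑ i ∈ Finset.range (l - 1), T (j + (i : ZMod N)) :=
          Finset.sum_le_sum fun j _ => Finset.sum_le_sum (hbond j)
      _ = ∑ i ∈ Finset.range (l - 1), ∑ j : ZMod N, T (j + (i : ZMod N)) :=
          Finset.sum_comm
      _ = ∑ i ∈ Finset.range (l - 1), ∑ k : ZMod N, T k := by
          apply Finset.sum_congr rfl
          intro i _
          exact Fintype.sum_equiv (Equiv.addRight ((i : ℕ) : ZMod N)) _ _ (fun j => rfl)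
      _ = ((l - 1 : ℕ) : ℝ) * ∑ k : ZMod N, T k := by
          rw [Finset.sum_const, Finset.card_range, nsmul_eq_mul]
      _ = ((l : ℝ) - 1) * ∑ k : ZMod N, T k := by
          congr 1
          have : (1 : ℕ) ≤ l := by omega
          push_cast [this]
          ring
  have hTsum_nonneg : 0 ≤ ∑ k : ZMod N, T k :=
    Finset.sum_nonneg fun k _ => hT_nonneg k
  have hlR : (0 : ℝ) < l := by positivity
  unfold dirichletN dirichletL
  rw [ge_iff_le]
  have hstep : (1 / (l : ℝ)) * ∑ j : ZMod N,
      (1 / 2) * ∑ i ∈ Finset.range (l - 1), S j i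
      ≤ (1 / 2) * ∑ k : ZMod N, T k := by
    rw [← Finset.mul_sum]
    have h1 : (1 / (l : ℝ)) * ((1 / 2) * ∑ j : ZMod N, ∑ i ∈ Finset.range (l - 1), S j i)
        ≤ (1 / (l : ℝ)) * ((1 / 2) * (((l : ℝ) - 1) * ∑ k : ZMod N, T k)) := by
      apply mul_le_mul_of_nonneg_left _ (by positivity)
      apply mul_le_mul_of_nonneg_left hsum1 (by norm_num)
    refine h1.trans ?_
    rw [show (1 / (l : ℝ)) * ((1 / 2) * (((l : ℝ) - 1) * ∑ k : ZMod N, T k))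
        = (1 / 2) * ((((l : ℝ) - 1) / l) * ∑ k : ZMod N, T k) by ring]
    apply mul_le_mul_of_nonneg_left _ (by norm_num)
    have : ((l : ℝ) - 1) / l ≤ 1 := by
      rw [div_le_one hlR]; linarith
    nlinarith [hTsum_nonneg]
  exact hstep

end
end

section
/- Exact formula for L^{N*}f/f for a tilted product measure. Let θ̃ : T^N → ℝ be arbitrary, let ν = Π_{j∈T^N} π_{θ̃(j)} and f = dν/dπ^N (a strictly positive function on Ω^N). Then for every z ∈ Ω^N: (L^{N*} f)(z) / f(z) = Σ_{j∈T^N} ( e^{θ̃(j) − θ̃(j+1)} − 1 ) c(z_{j+1}, z_j). -/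
open Real
open scoped BigOperators Classical

noncomputable section

/-- Log-moment generating function `F` of the single-site measure `p`. -/
def Ffun (zmin zmax : ℤ) (p : ℤ → ℝ) (θ : ℝ) : ℝ :=
  Real.log (∑ z ∈ Finset.Icc zmin zmax, Real.exp (θ * (z : ℝ)) * p z)

/-- Tilted single-site measure `π_θ`. -/
def spiTilt (zmin zmax : ℤ) (p : ℤ → ℝ) (θ : ℝ) (x : ℤ) : ℝ :=
  p x * Real.exp (θ * (x : ℝ) - Ffun zmin zmax p θ)

/-- The reversed generator `L^{N*}`: the elementary movements are
`(z_{j-1}, z_j) → (z_{j-1}+1, z_j−1)` with rate `c(z_j, z_{j-1})`. -/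
def LstarApply (zmin zmax : ℤ) (c : ℤ → ℤ → ℝ) (N : ℕ) [NeZero N]
    (g : (ZMod N → Spin zmin zmax) → ℝ) (z : ZMod N → Spin zmin zmax) : ℝ :=
  ∑ j : ZMod N, c (z j) (z (j - 1)) * (g (moveB j (j - 1) z) - g z)

/-- Exact formula for `L^{N*}f/f` for a tilted product measure. -/
theorem reversed_generator_formula_for_tilted_product
    (zmin zmax : ℤ) (hzz : zmin < zmax) (hzmin : zmin ≤ 0) (hzmax : 0 ≤ zmax)
    (c : ℤ → ℤ → ℝ)
    (hc_nonneg : ∀ x ∈ Finset.Icc zmin zmax, ∀ y ∈ Finset.Icc zmin zmax, 0 ≤ c x y)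
    (hA₁ : ∀ y ∈ Finset.Icc zmin zmax, c zmin y = 0)
    (hA₂ : ∀ x ∈ Finset.Icc zmin zmax, c x zmax = 0)
    (p : ℤ → ℝ) (hp_pos : ∀ x ∈ Finset.Icc zmin zmax, 0 < p x)
    (hp_sum : ∑ x ∈ Finset.Icc zmin zmax, p x = 1)
    (θ₀ : ℝ) (N : ℕ) [NeZero N]
    (θt : ZMod N → ℝ)
    (f : (ZMod N → Spin zmin zmax) → ℝ)
    (hf : f = fun z =>
      (∏ j : ZMod N, spiTilt zmin zmax p (θt j) (z j)) /
        (∏ j : ZMod N, spiTilt zmin zmax p θ₀ (z j))) :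
    ∀ z : ZMod N → Spin zmin zmax,
      LstarApply zmin zmax c N f z / f z
        = ∑ j : ZMod N, (Real.exp (θt j - θt (j + 1)) - 1) * c (z (j + 1)) (z j) := by
  intro z
  have hfexp : ∀ w : ZMod N → Spin zmin zmax,
      f w = Real.exp (∑ i : ZMod N, ((θt i - θ₀) * ((w i : ℤ) : ℝ)
              - (Ffun zmin zmax p (θt i) - Ffun zmin zmax p θ₀))) := by
    intro w
    rw [hf]
    simp only
    rw [← Finset.prod_div_distrib, Real.exp_sum]
    apply Finset.prod_congr rfl
    intro i _
    have hpne : p (w i : ℤ) ≠ 0 := (hp_pos _ (w i).2).ne'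
    simp only [spiTilt]
    rw [mul_div_mul_left _ _ hpne, ← Real.exp_sub]
    congr 1
    ring
  have hfpos : 0 < f z := by rw [hfexp z]; exact Real.exp_pos _
  have hmove : ∀ j : ZMod N, zmin < (z j : ℤ) → (z (j - 1) : ℤ) < zmax →
      f (moveB j (j - 1) z) = Real.exp (θt (j - 1) - θt j) * f z := by
    intro j h1 h2
    rw [hfexp, hfexp, ← Real.exp_add]
    congr 1
    have hmv : ∀ i : ZMod N, ((moveB j (j - 1) z i : ℤ) : ℝ)
        = ((z i : ℤ) : ℝ) - (if i = j then 1 else 0) + (if i = j - 1 then 1 else 0) := by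
      intro i
      simp only [moveB, dif_pos (And.intro h1 h2)]
      push_cast
      split_ifs <;> push_cast <;> ring
    have hterm : ∀ i : ZMod N,
        ((θt i - θ₀) * ((moveB j (j - 1) z i : ℤ) : ℝ)
          - (Ffun zmin zmax p (θt i) - Ffun zmin zmax p θ₀))
        = ((θt i - θ₀) * ((z i : ℤ) : ℝ)
          - (Ffun zmin zmax p (θt i) - Ffun zmin zmax p θ₀))
          + ((if i = j - 1 then θt i - θ₀ else 0) - (if i = j then θt i - θ₀ else 0)) := by
      intro i
      rw [hmv i]
      split_ifs <;> ring
    rw [Finset.sum_congr rfl (fun i _ => hterm i), Finset.sum_add_distrib]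
    have hsum : ∑ x : ZMod N,
        ((if x = j - 1 then θt x - θ₀ else 0) - if x = j then θt x - θ₀ else 0)
        = θt (j - 1) - θt j := by
      rw [Finset.sum_sub_distrib,
        Finset.sum_ite_eq' Finset.univ (j - 1) (fun i => θt i - θ₀),
        Finset.sum_ite_eq' Finset.univ j (fun i => θt i - θ₀)]
      simp only [Finset.mem_univ, if_true]
      ring
    rw [hsum]
    ring
  have hL : LstarApply zmin zmax c N f z
      = (∑ j : ZMod N, (Real.exp (θt (j - 1) - θt j) - 1) * c (z j) (z (j - 1))) * f z := by
    unfold LstarApply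
    rw [Finset.sum_mul]
    apply Finset.sum_congr rfl
    intro j _
    by_cases h1 : zmin < (z j : ℤ)
    · by_cases h2 : (z (j - 1) : ℤ) < zmax
      · rw [hmove j h1 h2]; ring
      · have hzj : (z (j - 1) : ℤ) = zmax := by
          have := Finset.mem_Icc.mp (z (j - 1)).2; omega
        have hc0 : c (z j : ℤ) (z (j - 1) : ℤ) = 0 := by
          rw [hzj]; exact hA₂ _ (z j).2
        rw [hc0]; ring
    · have hzj : (z j : ℤ) = zmin := by
        have := Finset.mem_Icc.mp (z j).2; omega
      have hc0 : c (z j : ℤ) (z (j - 1) : ℤ) = 0 := by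
        rw [hzj]; exact hA₁ _ (z (j - 1)).2
      rw [hc0]; ring
  rw [hL, mul_div_assoc, div_self hfpos.ne', mul_one]
  refine (Fintype.sum_equiv (Equiv.addRight (1 : ZMod N))
    (fun j => (Real.exp (θt j - θt (j + 1)) - 1) * c (z (j + 1) : ℤ) (z j : ℤ))
    (fun j => (Real.exp (θt (j - 1) - θt j) - 1) * c (z j : ℤ) (z (j - 1) : ℤ))
    (fun x => ?_)).symm
  simp [Equiv.coe_addRight, add_sub_cancel_right]


end
end

section
/- Entropy production inequality (Yau's inequality, finite state space). Let Ω be a finite set, L a Markov generator on functions on Ω (L f(x) = Σ_y q(x,y)(f(y) − f(x)) with jump rates q(x,y) ≥ 0), and π a strictly positive probability measure on Ω that is stationary for L (Σ_x π(x) (L f)(x) = 0 for all f). Let L* denote the adjoint of L in L²(Ω, π). Let t ↦ f_t be a continuously differentiable family of strictly positive probability densities with respect to π, ν_t := f_t · π, let μ₀ be a strictly positive probability measure on Ω and μ_t := μ₀ e^{tL} (i.e. ∫ g dμ_t = ∫ e^{tL} g dμ₀ for all g). Then for every t ≥ 0: (d/dt) H(μ_t | ν_t) ≤ ∫_Ω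 (L* f_t)/f_t dμ_t − ∫_Ω (∂_t f_t)/f_t dμ_t. -/
open Real
open scoped BigOperators Classical

noncomputable section

/-- The generator matrix of the Markov generator `L f (x) = Σ_y q(x,y)(f(y) − f(x))`,
so that `L f = genMatrix q |>.mulVec f`. -/
def genMatrix {Ω : Type*} [Fintype Ω] [DecidableEq Ω] (q : Ω → Ω → ℝ) :
    Matrix Ω Ω ℝ :=
  fun x y => q x y - if x = y then ∑ w, q x w else 0

/-- The adjoint generator matrix in `L²(Ω, π)`:
`L* g = (adjMatrix q pr).mulVec g`. -/
def adjMatrix {Ω : Type*} [Fintype Ω] [DecidableEq Ω] (q : Ω → Ω → ℝ) (pr : Ω → ℝ) :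
    Matrix Ω Ω ℝ :=
  fun x y => pr y * genMatrix q y x / pr x

/-- The true distribution at time `t`, i.e. `μ_t = μ₀ e^{tL}`,
   characterized by `∫ g dμ_t = ∫ e^{tL} g dμ₀`. -/
def muT {Ω : Type*} [Fintype Ω] [DecidableEq Ω] (q : Ω → Ω → ℝ) (μ0 : Ω → ℝ)
    (t : ℝ) : Ω → ℝ :=
  Matrix.vecMul μ0 (NormedSpace.exp (t • genMatrix q))

section Aux

open NormedSpace

variable {Ω : Type*} [Fintype Ω] [DecidableEq Ω]

lemma genMatrix_row_sum (q : Ω → Ω → ℝ) (y : Ω) : ∑ x, genMatrix q y x = 0 := by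
  simp [genMatrix, Finset.sum_sub_distrib]

lemma genMatrix_row_dot (q : Ω → Ω → ℝ) (h : Ω → ℝ) (y : Ω) :
    ∑ x, genMatrix q y x * h x = ∑ x, q y x * (h x - h y) := by
  simp only [genMatrix, sub_mul, ite_mul, zero_mul, mul_sub, Finset.sum_sub_distrib]
  congr 1
  rw [← Finset.sum_mul]
  simp

lemma vecMul_genMatrix_sum (q : Ω → Ω → ℝ) (v : Ω → ℝ) :
    ∑ x, Matrix.vecMul v (genMatrix q) x = 0 := by
  simp only [Matrix.vecMul, dotProduct]
  rw [Finset.sum_comm]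
  have : ∀ y, ∑ x, v y * genMatrix q y x = 0 := by
    intro y
    rw [← Finset.mul_sum, genMatrix_row_sum, mul_zero]
  simp [this]

lemma pow_entry_nonneg (M : Matrix Ω Ω ℝ) (hM : ∀ x y, 0 ≤ M x y) (n : ℕ) :
    ∀ x y, 0 ≤ (M ^ n) x y := by
  induction n with
  | zero => intro x y; simp [Matrix.one_apply]; split <;> norm_num
  | succ n ih =>
    intro x y
    rw [pow_succ, Matrix.mul_apply]
    exact Finset.sum_nonneg fun z _ => mul_nonneg (ih x z) (hM z y)

lemma exp_entry_ge_one_entry (M : Matrix Ω Ω ℝ) (hM : ∀ x y, 0 ≤ M x y) (x y : Ω) :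
    (1 : Matrix Ω Ω ℝ) x y ≤ NormedSpace.exp M x y := by
  letI : NormedRing (Matrix Ω Ω ℝ) := Matrix.linftyOpNormedRing
  letI : NormedAlgebra ℝ (Matrix Ω Ω ℝ) := Matrix.linftyOpNormedAlgebra
  have hs : Summable (fun n : ℕ => ((n.factorial : ℝ))⁻¹ • M ^ n) :=
    expSeries_summable' (𝕂 := ℝ) M
  let E : Matrix Ω Ω ℝ →L[ℝ] ℝ := LinearMap.toContinuousLinearMap
    { toFun := fun A => A x y
      map_add' := fun A B => rfl
      map_smul' := fun c A => rfl }
  have h2 : NormedSpace.exp M x y = ∑' n : ℕ, ((n.factorial : ℝ))⁻¹ * ((M ^ n) x y) := by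
    have := E.map_tsum hs
    rw [exp_eq_tsum ℝ]
    exact this
  have hs2 : Summable (fun n : ℕ => ((n.factorial : ℝ))⁻¹ * ((M ^ n) x y)) := by
    have := hs.map E.toLinearMap E.continuous
    exact this
  have h3 := Summable.le_tsum hs2 0
    (fun j _ => mul_nonneg (by positivity) (pow_entry_nonneg M hM j x y))
  simpa [h2] using h3

lemma hasDerivAt_muT (q : Ω → Ω → ℝ) (μ0 : Ω → ℝ) (t : ℝ) (x : Ω) :
    HasDerivAt (fun s => muT q μ0 s x)
      (Matrix.vecMul (muT q μ0 t) (genMatrix q) x) t := by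
  letI : NormedRing (Matrix Ω Ω ℝ) := Matrix.linftyOpNormedRing
  letI : NormedAlgebra ℝ (Matrix Ω Ω ℝ) := Matrix.linftyOpNormedAlgebra
  set A := genMatrix q
  have hd : HasDerivAt (fun s : ℝ => NormedSpace.exp (s • A))
      (NormedSpace.exp (t • A) * A) t := hasDerivAt_exp_smul_const A t
  let E : Matrix Ω Ω ℝ →L[ℝ] ℝ := LinearMap.toContinuousLinearMap
    { toFun := fun B => Matrix.vecMul μ0 B x
      map_add' := fun B C => by
        simp [Matrix.vecMul, dotProduct, mul_add, Finset.sum_add_distrib]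
      map_smul' := fun c B => by
        simp [Matrix.vecMul, dotProduct, Finset.mul_sum, mul_left_comm] }
  have h := E.hasFDerivAt.comp_hasDerivAt t hd
  have h2 : E (NormedSpace.exp (t • A) * A)
      = Matrix.vecMul (muT q μ0 t) A x := by
    simp [E, LinearMap.toContinuousLinearMap, muT, Matrix.vecMul_vecMul, A]
  exact h.congr_deriv h2

lemma muT_pos [Nonempty Ω] (q : Ω → Ω → ℝ) (hq_nonneg : ∀ x y, 0 ≤ q x y)
    (μ0 : Ω → ℝ) (hμ0_pos : ∀ x, 0 < μ0 x) {t : ℝ} (ht : 0 ≤ t) (y : Ω) :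
    0 < muT q μ0 t y := by
  classical
  set c : ℝ := ∑ x, ∑ w, q x w with hc
  have hc_le : ∀ x, ∑ w, q x w ≤ c := by
    intro x
    exact Finset.single_le_sum
      (f := fun x => ∑ w, q x w)
      (fun i _ => Finset.sum_nonneg fun w _ => hq_nonneg i w) (Finset.mem_univ x)
  set N : Matrix Ω Ω ℝ := t • genMatrix q + (t * c) • (1 : Matrix Ω Ω ℝ) with hN
  have hN_nonneg : ∀ x z, 0 ≤ N x z := by
    intro x z
    by_cases hxz : x = z
    · subst hxz
      have : N x x = t * (q x x - ∑ w, q x w) + t * c := by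
        simp [hN, genMatrix, Matrix.one_apply, Matrix.add_apply, Matrix.smul_apply]
      rw [this]
      have hs0 : (0:ℝ) ≤ ∑ w, q x w :=
        Finset.sum_nonneg (s := Finset.univ) (fun w _ => hq_nonneg x w)
      nlinarith [hq_nonneg x x, hc_le x]
    · have hqz := mul_nonneg ht (hq_nonneg x z)
      simpa [hN, genMatrix, Matrix.one_apply, Matrix.add_apply, Matrix.smul_apply, hxz] using hqz
  have hsplit : t • genMatrix q = N + (-(t * c)) • (1 : Matrix Ω Ω ℝ) := by
    rw [hN]
    module
  have hexp : NormedSpace.exp (t • genMatrix q)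
      = Real.exp (-(t * c)) • NormedSpace.exp N := by
    rw [hsplit, Matrix.exp_add_of_commute N _ (by
      simpa using (Commute.one_right N).smul_right (-(t * c)))]
    have h1 : ((-(t * c)) • (1 : Matrix Ω Ω ℝ)) = algebraMap ℝ (Matrix Ω Ω ℝ) (-(t * c)) := by
      rw [Algebra.algebraMap_eq_smul_one]
    letI : NormedRing (Matrix Ω Ω ℝ) := Matrix.linftyOpNormedRing
    letI : NormedAlgebra ℝ (Matrix Ω Ω ℝ) := Matrix.linftyOpNormedAlgebra
    rw [h1]
    erw [← algebraMap_exp_comm]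
    rw [← Real.exp_eq_exp_ℝ, Algebra.algebraMap_eq_smul_one]
    rw [mul_smul_comm, mul_one]
  have hEnn : ∀ x z, 0 ≤ NormedSpace.exp N x z := by
    intro x z
    refine le_trans ?_ (exp_entry_ge_one_entry N hN_nonneg x z)
    simp [Matrix.one_apply]
    split <;> norm_num
  have hEdiag : 1 ≤ NormedSpace.exp N y y := by
    have := exp_entry_ge_one_entry N hN_nonneg y y
    simpa [Matrix.one_apply] using this
  have hval : muT q μ0 t y = ∑ x, μ0 x * (Real.exp (-(t * c)) * NormedSpace.exp N x y) := by
    simp [muT, hexp, Matrix.vecMul, dotProduct, Matrix.smul_apply]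
  rw [hval]
  have hterm : ∀ x ∈ Finset.univ, 0 ≤ μ0 x * (Real.exp (-(t * c)) * NormedSpace.exp N x y) :=
    fun x _ => mul_nonneg (hμ0_pos x).le (mul_nonneg (Real.exp_pos _).le (hEnn x y))
  refine Finset.sum_pos' (fun x hx => hterm x hx) ⟨y, Finset.mem_univ y, ?_⟩
  have : 0 < Real.exp (-(t * c)) * NormedSpace.exp N y y :=
    mul_pos (Real.exp_pos _) (lt_of_lt_of_le one_pos hEdiag)
  exact mul_pos (hμ0_pos y) this

lemma key_ineq (q : Ω → Ω → ℝ) (hq_nonneg : ∀ x y, 0 ≤ q x y)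
    (pr : Ω → ℝ) (hpr_pos : ∀ x, 0 < pr x)
    (m F : Ω → ℝ) (hm : ∀ x, 0 < m x) (hF : ∀ x, 0 < F x) :
    ∑ x, Matrix.vecMul m (genMatrix q) x * Real.log (m x / (F x * pr x)) ≤
    ∑ x, m x * ((adjMatrix q pr).mulVec F x / F x) := by
  classical
  set g : Ω → ℝ := fun x => m x / (F x * pr x) with hgdef
  have hg : ∀ x, 0 < g x := fun x =>
    div_pos (hm x) (mul_pos (hF x) (hpr_pos x))
  have step1 : ∑ x, Matrix.vecMul m (genMatrix q) x * Real.log (g x)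
      = ∑ y, m y * ∑ x, q y x * (Real.log (g x) - Real.log (g y)) := by
    simp only [Matrix.vecMul, dotProduct, Finset.sum_mul]
    rw [Finset.sum_comm]
    refine Finset.sum_congr rfl fun y _ => ?_
    rw [← genMatrix_row_dot q (fun x => Real.log (g x)) y, Finset.mul_sum]
    refine Finset.sum_congr rfl fun x _ => ?_
    ring
  have step2 : ∑ y, m y * ∑ x, q y x * (Real.log (g x) - Real.log (g y))
      ≤ ∑ y, m y * ∑ x, q y x * (g x / g y - 1) := by
    refine Finset.sum_le_sum fun y _ => mul_le_mul_of_nonneg_left ?_ (hm y).le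
    refine Finset.sum_le_sum fun x _ => mul_le_mul_of_nonneg_left ?_ (hq_nonneg y x)
    rw [← Real.log_div (hg x).ne' (hg y).ne']
    exact Real.log_le_sub_one_of_pos (div_pos (hg x) (hg y))
  have step3 : ∑ y, m y * ∑ x, q y x * (g x / g y - 1)
      = ∑ y, pr y * F y * ∑ x, genMatrix q y x * g x := by
    refine Finset.sum_congr rfl fun y _ => ?_
    rw [genMatrix_row_dot q g y, Finset.mul_sum, Finset.mul_sum]
    refine Finset.sum_congr rfl fun x _ => ?_
    have hmy : m y = g y * (F y * pr y) :=
      (div_mul_cancel₀ (m y) (mul_pos (hF y) (hpr_pos y)).ne').symm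
    rw [hmy]
    field_simp [(hg y).ne']
  have step4 : ∑ y, pr y * F y * ∑ x, genMatrix q y x * g x
      = ∑ x, m x * ((adjMatrix q pr).mulVec F x / F x) := by
    simp only [Matrix.mulVec, dotProduct, adjMatrix, Finset.mul_sum]
    rw [Finset.sum_comm]
    refine Finset.sum_congr rfl fun x _ => ?_
    rw [Finset.sum_div, Finset.mul_sum]
    refine Finset.sum_congr rfl fun y _ => ?_
    rw [hgdef]
    field_simp
  calc ∑ x, Matrix.vecMul m (genMatrix q) x * Real.log (g x)
      = ∑ y, m y * ∑ x, q y x * (Real.log (g x) - Real.log (g y)) := step1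
    _ ≤ ∑ y, m y * ∑ x, q y x * (g x / g y - 1) := step2
    _ = ∑ y, pr y * F y * ∑ x, genMatrix q y x * g x := step3
    _ = ∑ x, m x * ((adjMatrix q pr).mulVec F x / F x) := step4

end Aux

/-- Entropy production inequality (Yau's inequality, finite state
space). -/
theorem entropy_production_inequality
    (Ω : Type*) [Fintype Ω] [DecidableEq Ω] [Nonempty Ω]
    (q : Ω → Ω → ℝ) (hq_nonneg : ∀ x y, 0 ≤ q x y)
    (pr : Ω → ℝ) (hpr_pos : ∀ x, 0 < pr x) (hpr_sum : ∑ x, pr x = 1)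
    (hstat : ∀ g : Ω → ℝ, ∑ x, pr x * ((genMatrix q).mulVec g x) = 0)
    (f : ℝ → Ω → ℝ)
    (hf_diff : ∀ x, ContDiff ℝ 1 (fun t => f t x))
    (hf_pos : ∀ t x, 0 < f t x)
    (hf_prob : ∀ t, ∑ x, pr x * f t x = 1)
    (μ0 : Ω → ℝ) (hμ0_pos : ∀ x, 0 < μ0 x) (hμ0_sum : ∑ x, μ0 x = 1) :
    ∀ t : ℝ, 0 ≤ t →
      ∀ d : ℝ,
        HasDerivAt
          (fun s => ∑ x, muT q μ0 s x * Real.log (muT q μ0 s x / (f s x * pr x))) d t →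
        d ≤ (∑ x, muT q μ0 t x * (((adjMatrix q pr).mulVec (f t)) x / f t x))
            - ∑ x, muT q μ0 t x * (deriv (fun s => f s x) t / f t x) := by
  intro t ht d hd
  have hm_pos : ∀ x, 0 < muT q μ0 t x := fun x => muT_pos q hq_nonneg μ0 hμ0_pos ht x
  have hH : HasDerivAt
      (fun s => ∑ x, muT q μ0 s x * Real.log (muT q μ0 s x / (f s x * pr x)))
      (∑ x, (Matrix.vecMul (muT q μ0 t) (genMatrix q) x
              * Real.log (muT q μ0 t x / (f t x * pr x))
            + (Matrix.vecMul (muT q μ0 t) (genMatrix q) x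
              - muT q μ0 t x * (deriv (fun s => f s x) t / f t x)))) t := by
    refine HasDerivAt.fun_sum fun x _ => ?_
    have h1 : HasDerivAt (fun s => muT q μ0 s x)
        (Matrix.vecMul (muT q μ0 t) (genMatrix q) x) t := hasDerivAt_muT q μ0 t x
    have hfd : HasDerivAt (fun s => f s x) (deriv (fun s => f s x) t) t :=
      ((hf_diff x).differentiable one_ne_zero t).hasDerivAt
    have h2 : HasDerivAt (fun s => f s x * pr x) (deriv (fun s => f s x) t * pr x) t :=
      hfd.mul_const _
    have hcne : f t x * pr x ≠ 0 := (mul_pos (hf_pos t x) (hpr_pos x)).ne'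
    have h3 := h1.div h2 hcne
    have hratio_ne : muT q μ0 t x / (f t x * pr x) ≠ 0 :=
      (div_pos (hm_pos x) (mul_pos (hf_pos t x) (hpr_pos x))).ne'
    have h4 := h3.log hratio_ne
    have h5 := h1.mul h4
    refine h5.congr_deriv ?_
    have hmne := (hm_pos x).ne'
    have hfne := (hf_pos t x).ne'
    have hpne := (hpr_pos x).ne'
    simp only [Pi.div_apply]
    field_simp
  have hd_eq := hd.unique hH
  have hsum0 : ∑ x, Matrix.vecMul (muT q μ0 t) (genMatrix q) x = 0 :=
    vecMul_genMatrix_sum q (muT q μ0 t)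
  have hkey := key_ineq q hq_nonneg pr hpr_pos (muT q μ0 t) (f t) hm_pos (hf_pos t)
  rw [hd_eq, Finset.sum_add_distrib, Finset.sum_sub_distrib, hsum0]
  linarith [hkey]

end
end

section
/- Equivalence of the cyclic rate condition with the existence of the function r. Let z_min < z_max be integers, S = {z_min, …, z_max} ⊂ ℤ, and let c : S×S → [0,∞) satisfy c(x, y) > 0 whenever x > z_min and y < z_max. Then the following are equivalent: (i) for all x, y, z ∈ S with x, y, z > z_min: c(x, y−1) c(y, z−1) c(z, x−1) = c(y, x−1) c(z, y−1) c(x, z−1); (ii) there exists r : S → [0,∞) with r(z_min) = 0 and r(x) > 0 for all x ∈ S with x > z_min, such that c(x, y−1) r(y) = c(y, x−1) r(x) for all x, y ∈ S with x, y > z_min. -/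
/-- Equivalence of the cyclic rate condition with the existence of
the function `r`. -/
theorem cyclic_condition_iff_exists_r
    (zmin zmax : ℤ) (hz : zmin < zmax)
    (c : ℤ → ℤ → ℝ)
    (hc_nonneg : ∀ x ∈ Finset.Icc zmin zmax, ∀ y ∈ Finset.Icc zmin zmax, 0 ≤ c x y)
    (hc_pos : ∀ x ∈ Finset.Icc zmin zmax, ∀ y ∈ Finset.Icc zmin zmax,
      zmin < x → y < zmax → 0 < c x y) :
    (∀ x ∈ Finset.Icc zmin zmax, ∀ y ∈ Finset.Icc zmin zmax, ∀ z ∈ Finset.Icc zmin zmax,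
        zmin < x → zmin < y → zmin < z →
        c x (y - 1) * c y (z - 1) * c z (x - 1) = c y (x - 1) * c z (y - 1) * c x (z - 1))
      ↔
    (∃ r : ℤ → ℝ,
        r zmin = 0 ∧
        (∀ x ∈ Finset.Icc zmin zmax, zmin < x → 0 < r x) ∧
        (∀ x ∈ Finset.Icc zmin zmax, ∀ y ∈ Finset.Icc zmin zmax,
          zmin < x → zmin < y → c x (y - 1) * r y = c y (x - 1) * r x)) := by
  have hzmax : zmax ∈ Finset.Icc zmin zmax := by simp [Finset.mem_Icc]; omega
  have hmem : ∀ x ∈ Finset.Icc zmin zmax, zmin < x → x - 1 ∈ Finset.Icc zmin zmax := by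
    intro x hx h; simp only [Finset.mem_Icc] at *; omega
  constructor
  · intro hcyc
    refine ⟨fun x => if zmin < x then c x (zmax - 1) / c zmax (x - 1) else 0, by simp, ?_, ?_⟩
    · intro x hx hxm
      simp only [if_pos hxm]
      have h1 : 0 < c x (zmax - 1) := hc_pos x hx (zmax - 1) (hmem zmax hzmax hz) hxm (by omega)
      have h2 : 0 < c zmax (x - 1) := hc_pos zmax hzmax (x - 1) (hmem x hx hxm)
        hz (by simp only [Finset.mem_Icc] at hx; omega)
      positivity
    · intro x hx y hy hxm hym
      simp only [if_pos hxm, if_pos hym]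
      have h2 : 0 < c zmax (x - 1) := hc_pos zmax hzmax (x - 1) (hmem x hx hxm)
        hz (by simp only [Finset.mem_Icc] at hx; omega)
      have h3 : 0 < c zmax (y - 1) := hc_pos zmax hzmax (y - 1) (hmem y hy hym)
        hz (by simp only [Finset.mem_Icc] at hy; omega)
      have key := hcyc x hx y hy zmax hzmax hxm hym hz
      field_simp
      nlinarith [key]
  · rintro ⟨r, -, hrpos, hr⟩ x hx y hy z hz' hxm hym hzm
    have hx' := hrpos x hx hxm
    have hy' := hrpos y hy hym
    have hz'' := hrpos z hz' hzm
    have h1 := hr x hx y hy hxm hym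
    have h2 := hr y hy z hz' hym hzm
    have h3 := hr z hz' x hx hzm hxm
    have := mul_pos (mul_pos hx' hy') hz''
    apply mul_right_cancel₀ (ne_of_gt this)
    have key : (c x (y-1) * r y) * ((c y (z-1) * r z) * (c z (x-1) * r x)) =
        (c y (x-1) * r x) * ((c z (y-1) * r y) * (c x (z-1) * r z)) := by
      rw [h1, h2, h3]
    linear_combination key
end

section
/- Generalized Hölder inequality for block-local functions under a product measure. Let N = M·l with M, l ∈ ℕ, let (E_j, 𝔈_j, ν_j)_{j∈T^N} be probability spaces and ν = ⊗_{j∈T^N} ν_j the product probability measure on E = Π_{j∈T^N} E_j. For each j ∈ T^N let g_j : E → [0,∞) be measurable and depend only on the coordinates (z_j, z_{j+1}, …, z_{j+l−1}) (indices mod N). Then ∫_E exp( Σ_{j∈T^N} g_j ) dν ≤ ( Π_{j∈T^N} ∫_E exp( l · g_j ) dν )^{1/l}, the inequality holding in [0, ∞]. -/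
open MeasureTheory ENNReal

section Aux

variable {ι : Type*} [Fintype ι] {E : ι → Type*} [∀ j, MeasurableSpace (E j)]
  (ν : ∀ j, Measure (E j)) [∀ j, IsProbabilityMeasure (ν j)]

lemma aux_nonempty' {α : Type*} [MeasurableSpace α] (μ : Measure α)
    [IsProbabilityMeasure μ] : Nonempty α := by
  by_contra h
  rw [not_nonempty_iff] at h
  have h1 : μ Set.univ = 1 := measure_univ
  rw [Set.univ_eq_empty_iff.mpr h, measure_empty] at h1
  exact zero_ne_one h1

/-- Factorization of a product of two functions depending on complementary sets of
coordinates, under a product probability measure. -/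
lemma lintegral_mul_of_disjoint_deps (p : ι → Prop) [DecidablePred p]
    (f g : (∀ j, E j) → ℝ≥0∞) (hf : Measurable f) (hg : Measurable g)
    (hfp : ∀ z w : ∀ j, E j, (∀ j, p j → z j = w j) → f z = f w)
    (hgp : ∀ z w : ∀ j, E j, (∀ j, ¬ p j → z j = w j) → g z = g w) :
    ∫⁻ z, f z * g z ∂(Measure.pi ν)
      = (∫⁻ z, f z ∂(Measure.pi ν)) * ∫⁻ z, g z ∂(Measure.pi ν) := by
  classical
  have hne : ∀ j, Nonempty (E j) := fun j => aux_nonempty' (ν j)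
  obtain ⟨x₀⟩ : Nonempty (∀ j : Subtype p, E j) := ⟨fun j => (hne j.1).some⟩
  obtain ⟨y₀⟩ : Nonempty (∀ j : {j // ¬ p j}, E j) := ⟨fun j => (hne j.1).some⟩
  set e := MeasurableEquiv.piEquivPiSubtypeProd E p with he
  set μ₁ := Measure.pi fun i : Subtype p => ν i with hμ₁
  set μ₂ := Measure.pi fun i : {j // ¬ p j} => ν i with hμ₂
  have hmp : MeasurePreserving e (Measure.pi ν) (μ₁.prod μ₂) :=
    measurePreserving_piEquivPiSubtypeProd ν p
  have esymm : ∀ (x : ∀ j : Subtype p, E j) (y : ∀ j : {j // ¬ p j}, E j) (j : ι),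
      e.symm (x, y) j = if h : p j then x ⟨j, h⟩ else y ⟨j, h⟩ := fun _ _ _ => rfl
  have key : ∀ (h : (∀ j, E j) → ℝ≥0∞), Measurable h →
      ∫⁻ z, h z ∂(Measure.pi ν) = ∫⁻ q, h (e.symm q) ∂(μ₁.prod μ₂) := by
    intro h hh
    have := hmp.lintegral_comp (f := fun q => h (e.symm q)) (hh.comp e.symm.measurable)
    simpa using this
  set F : (∀ j : Subtype p, E j) → ℝ≥0∞ := fun x => f (e.symm (x, y₀)) with hF
  set G : (∀ j : {j // ¬ p j}, E j) → ℝ≥0∞ := fun y => g (e.symm (x₀, y)) with hG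
  have hFmeas : Measurable F :=
    hf.comp (e.symm.measurable.comp (measurable_id.prodMk measurable_const))
  have hGmeas : Measurable G :=
    hg.comp (e.symm.measurable.comp (measurable_const.prodMk measurable_id))
  have hfF : ∀ q : (∀ j : Subtype p, E j) × (∀ j : {j // ¬ p j}, E j),
      f (e.symm q) = F q.1 := by
    intro q
    refine hfp _ _ fun j hj => ?_
    rw [show q = (q.1, q.2) from rfl, esymm, esymm, dif_pos hj, dif_pos hj]
  have hgG : ∀ q : (∀ j : Subtype p, E j) × (∀ j : {j // ¬ p j}, E j),
      g (e.symm q) = G q.2 := by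
    intro q
    refine hgp _ _ fun j hj => ?_
    rw [show q = (q.1, q.2) from rfl, esymm, esymm, dif_neg hj, dif_neg hj]
  have h1 : ∫⁻ z, f z * g z ∂(Measure.pi ν) = (∫⁻ x, F x ∂μ₁) * ∫⁻ y, G y ∂μ₂ := by
    rw [key (fun z => f z * g z) (hf.mul hg)]
    calc ∫⁻ q, f (e.symm q) * g (e.symm q) ∂(μ₁.prod μ₂)
        = ∫⁻ q, F q.1 * G q.2 ∂(μ₁.prod μ₂) :=
          lintegral_congr fun q => by rw [hfF, hgG]
      _ = (∫⁻ x, F x ∂μ₁) * ∫⁻ y, G y ∂μ₂ :=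
          lintegral_prod_mul hFmeas.aemeasurable hGmeas.aemeasurable
  have h2 : ∫⁻ z, f z ∂(Measure.pi ν) = ∫⁻ x, F x ∂μ₁ := by
    rw [key _ hf]
    calc ∫⁻ q, f (e.symm q) ∂(μ₁.prod μ₂)
        = ∫⁻ q, F q.1 * (fun _ => (1:ℝ≥0∞)) q.2 ∂(μ₁.prod μ₂) :=
          lintegral_congr fun q => by rw [hfF]; simp
      _ = (∫⁻ x, F x ∂μ₁) * ∫⁻ _, (1:ℝ≥0∞) ∂μ₂ :=
          lintegral_prod_mul hFmeas.aemeasurable aemeasurable_const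
      _ = ∫⁻ x, F x ∂μ₁ := by simp
  have h3 : ∫⁻ z, g z ∂(Measure.pi ν) = ∫⁻ y, G y ∂μ₂ := by
    rw [key _ hg]
    calc ∫⁻ q, g (e.symm q) ∂(μ₁.prod μ₂)
        = ∫⁻ q, (fun _ => (1:ℝ≥0∞)) q.1 * G q.2 ∂(μ₁.prod μ₂) :=
          lintegral_congr fun q => by rw [hgG]; simp
      _ = (∫⁻ _, (1:ℝ≥0∞) ∂μ₁) * ∫⁻ y, G y ∂μ₂ :=
          lintegral_prod_mul aemeasurable_const hGmeas.aemeasurable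
      _ = ∫⁻ y, G y ∂μ₂ := by simp
  rw [h1, h2, h3]

/-- Factorization of a product of finitely many functions depending on pairwise
disjoint sets of coordinates, under a product probability measure. -/
lemma lintegral_finset_prod_of_disjoint_deps {κ : Type*} (s : Finset κ) (B : κ → Set ι)
    (hB : ∀ k ∈ s, ∀ k' ∈ s, k ≠ k' → Disjoint (B k) (B k'))
    (h : κ → (∀ j, E j) → ℝ≥0∞) (hmeas : ∀ k, Measurable (h k))
    (hdep : ∀ k ∈ s, ∀ z w : ∀ j, E j, (∀ j ∈ B k, z j = w j) → h k z = h k w) :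
    ∫⁻ z, ∏ k ∈ s, h k z ∂(Measure.pi ν) = ∏ k ∈ s, ∫⁻ z, h k z ∂(Measure.pi ν) := by
  classical
  induction s using Finset.induction with
  | empty => simp
  | @insert a s ha ih =>
    have hgdep : ∀ z w : ∀ j, E j, (∀ j, ¬ j ∈ B a → z j = w j) →
        (∏ k ∈ s, h k z) = ∏ k ∈ s, h k w := by
      intro z w hzw
      refine Finset.prod_congr rfl fun k hk => ?_
      refine hdep k (Finset.mem_insert_of_mem hk) z w fun j hj => ?_
      refine hzw j ?_
      have hdisj := hB a (Finset.mem_insert_self a s) k (Finset.mem_insert_of_mem hk)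
        (fun hak => ha (hak ▸ hk))
      exact fun hja => (Set.disjoint_left.mp hdisj hja) hj
    have step1 : ∫⁻ z, ∏ k ∈ insert a s, h k z ∂(Measure.pi ν)
        = ∫⁻ z, h a z * ∏ k ∈ s, h k z ∂(Measure.pi ν) :=
      lintegral_congr fun z => Finset.prod_insert ha
    have step2 := lintegral_mul_of_disjoint_deps ν (fun j => j ∈ B a) (h a)
      (fun z => ∏ k ∈ s, h k z) (hmeas a)
      (Finset.measurable_prod s fun k _ => hmeas k)
      (fun z w hzw => hdep a (Finset.mem_insert_self a s) z w hzw) hgdep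
    have step3 := ih
      (fun k hk k' hk' hkk' => hB k (Finset.mem_insert_of_mem hk) k'
        (Finset.mem_insert_of_mem hk') hkk')
      (fun k hk => hdep k (Finset.mem_insert_of_mem hk))
    rw [step1, step2, step3, Finset.prod_insert ha]

end Aux

set_option maxHeartbeats 1000000 in
/-- Generalized Hölder inequality for block-local functions under a
product measure. -/
theorem holder_inequality_for_block_local_functions
    (M l : ℕ) (hM : 0 < M) (hl : 0 < l) (N : ℕ) [NeZero N] (hN : N = M * l)
    (E : ZMod N → Type*) [∀ j, MeasurableSpace (E j)]
    (ν : ∀ j, Measure (E j)) [∀ j, IsProbabilityMeasure (ν j)]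
    (g : ZMod N → (∀ j, E j) → ℝ)
    (hg_nonneg : ∀ j z, 0 ≤ g j z)
    (hg_meas : ∀ j, Measurable (g j))
    (hg_local : ∀ j : ZMod N, ∀ z w : ∀ i, E i,
      (∀ i : Fin l, z (j + (i : ℕ)) = w (j + (i : ℕ))) → g j z = g j w) :
    ∫⁻ z, ENNReal.ofReal (Real.exp (∑ j : ZMod N, g j z)) ∂(Measure.pi ν)
      ≤ (∏ j : ZMod N,
          ∫⁻ z, ENNReal.ofReal (Real.exp ((l : ℝ) * g j z)) ∂(Measure.pi ν)) ^ (1 / (l : ℝ)) := by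
  classical
  have hl0 : (l : ℝ) ≠ 0 := Nat.cast_ne_zero.mpr hl.ne'
  have hl0' : (0:ℝ) ≤ 1 / (l : ℝ) := by positivity
  -- the key arithmetic fact
  have hkey : ∀ (k k' : Fin M) (r r' : Fin l),
      (((k : ℕ) * l + r : ℕ) : ZMod N) = (((k' : ℕ) * l + r' : ℕ) : ZMod N) →
      k = k' ∧ r = r' := by
    intro k k' r r' hcast
    have hlt : ∀ (a : Fin M) (b : Fin l), (a : ℕ) * l + b < N := by
      intro a b
      rw [hN]
      calc (a : ℕ) * l + b < (a : ℕ) * l + l := Nat.add_lt_add_left b.isLt _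
        _ = ((a : ℕ) + 1) * l := by ring
        _ ≤ M * l := Nat.mul_le_mul_right l (Nat.succ_le_of_lt a.isLt)
    have hval := congrArg ZMod.val hcast
    rw [ZMod.val_natCast_of_lt (hlt k r), ZMod.val_natCast_of_lt (hlt k' r')] at hval
    have hr : (r : ℕ) = (r' : ℕ) := by
      have h1 : ((k : ℕ) * l + r) % l = (r : ℕ) % l := by
        rw [Nat.mul_comm]; exact Nat.mul_add_mod _ _ _
      have h2 : ((k' : ℕ) * l + r') % l = (r' : ℕ) % l := by
        rw [Nat.mul_comm]; exact Nat.mul_add_mod _ _ _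
      rw [Nat.mod_eq_of_lt r.isLt] at h1
      rw [Nat.mod_eq_of_lt r'.isLt] at h2
      rw [← h1, ← h2, hval]
    have hk : (k : ℕ) = (k' : ℕ) := by
      have : (k : ℕ) * l = (k' : ℕ) * l := by omega
      exact Nat.eq_of_mul_eq_mul_right hl this
    exact ⟨Fin.ext hk, Fin.ext hr⟩
  -- the reindexing bijection
  set φ : Fin M × Fin l → ZMod N := fun q => (((q.1 : ℕ) * l + q.2 : ℕ) : ZMod N) with hφ
  have hφinj : Function.Injective φ := by
    rintro ⟨k, i⟩ ⟨k', i'⟩ hq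
    obtain ⟨h1, h2⟩ := hkey k k' i i' hq
    exact Prod.ext h1 h2
  have hφbij : Function.Bijective φ := by
    refine (Fintype.bijective_iff_injective_and_card φ).mpr ⟨hφinj, ?_⟩
    simp [ZMod.card, hN, mul_comm]
  -- blocks
  set B : ZMod N → Set (ZMod N) := fun j => {t | ∃ r : Fin l, t = j + ((r : ℕ) : ZMod N)}
    with hB
  have hg_dep : ∀ j, ∀ z w : ∀ i, E i, (∀ t ∈ B j, z t = w t) → g j z = g j w := by
    intro j z w hzw
    exact hg_local j z w fun i => hzw _ ⟨i, rfl⟩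
  have hB_disj : ∀ (i : Fin l) (k k' : Fin M), k ≠ k' →
      Disjoint (B (φ (k, i))) (B (φ (k', i))) := by
    intro i k k' hkk'
    rw [Set.disjoint_left]
    rintro t ⟨r, rfl⟩ ⟨r', hr'⟩
    have h2 : (((k : ℕ) * l + r : ℕ) : ZMod N) = (((k' : ℕ) * l + r' : ℕ) : ZMod N) := by
      simp only [hφ] at hr'
      push_cast at hr' ⊢
      linear_combination hr'
    exact hkk' (hkey k k' r r' h2).1
  set π := Measure.pi ν with hπ
  set I : ZMod N → ℝ≥0∞ :=
    fun j => ∫⁻ z, ENNReal.ofReal (Real.exp ((l : ℝ) * g j z)) ∂π with hI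
  set S : Fin l → (∀ j, E j) → ℝ := fun i z => ∑ k : Fin M, g (φ (k, i)) z with hS
  have hSmeas : ∀ i, Measurable (S i) := fun i => Finset.measurable_sum _ fun k _ => hg_meas _
  set f : Fin l → (∀ j, E j) → ℝ≥0∞ :=
    fun i z => ENNReal.ofReal (Real.exp ((l : ℝ) * S i z)) with hf
  have hfmeas : ∀ i, Measurable (f i) :=
    fun i => (((hSmeas i).const_mul _).exp).ennreal_ofReal
  -- Step A: pointwise identity
  have hA : ∀ z, ENNReal.ofReal (Real.exp (∑ j : ZMod N, g j z))
      = ∏ i : Fin l, (f i z) ^ (1 / (l : ℝ)) := by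
    intro z
    have hsum : ∑ j : ZMod N, g j z = ∑ i : Fin l, S i z := by
      rw [← Fintype.sum_bijective φ hφbij (fun q => g (φ q) z) (fun j => g j z)
        (fun q => rfl)]
      exact Fintype.sum_prod_type_right _
    rw [hsum, Real.exp_sum, ENNReal.ofReal_prod_of_nonneg (fun i _ => (Real.exp_pos _).le)]
    refine Finset.prod_congr rfl fun i _ => ?_
    have hfi : f i z = (ENNReal.ofReal (Real.exp (S i z))) ^ (l : ℕ) := by
      simp only [hf]
      rw [Real.exp_nat_mul, ENNReal.ofReal_pow (Real.exp_pos _).le]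
    rw [hfi, ← ENNReal.rpow_natCast, ← ENNReal.rpow_mul, mul_one_div_cancel hl0,
      ENNReal.rpow_one]
  -- Step B: Hölder
  have hB2 : ∫⁻ z, ∏ i : Fin l, (f i z) ^ (1 / (l : ℝ)) ∂π
      ≤ ∏ i : Fin l, (∫⁻ z, f i z ∂π) ^ (1 / (l : ℝ)) := by
    refine ENNReal.lintegral_prod_norm_pow_le Finset.univ
      (fun i _ => (hfmeas i).aemeasurable) ?_ (fun i _ => hl0')
    rw [Finset.sum_const, Finset.card_univ, Fintype.card_fin, nsmul_eq_mul,
      mul_one_div_cancel hl0]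
  -- Step C: independence within each class
  have hC : ∀ i : Fin l, ∫⁻ z, f i z ∂π = ∏ k : Fin M, I (φ (k, i)) := by
    intro i
    have hpt : ∀ z, f i z
        = ∏ k : Fin M, ENNReal.ofReal (Real.exp ((l : ℝ) * g (φ (k, i)) z)) := by
      intro z
      simp only [hf, hS]
      rw [Finset.mul_sum, Real.exp_sum,
        ENNReal.ofReal_prod_of_nonneg (fun k _ => (Real.exp_pos _).le)]
    calc ∫⁻ z, f i z ∂π
        = ∫⁻ z, ∏ k : Fin M,
            ENNReal.ofReal (Real.exp ((l : ℝ) * g (φ (k, i)) z)) ∂π :=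
          lintegral_congr hpt
      _ = ∏ k : Fin M, I (φ (k, i)) := by
          refine lintegral_finset_prod_of_disjoint_deps ν Finset.univ
            (fun k => B (φ (k, i))) ?_ _ ?_ ?_
          · intro k _ k' _ hkk'
            exact hB_disj i k k' hkk'
          · intro k
            exact ((hg_meas _).const_mul _).exp.ennreal_ofReal
          · intro k _ z w hzw
            rw [hg_dep (φ (k, i)) z w hzw]
  -- Step D: conclusion
  calc ∫⁻ z, ENNReal.ofReal (Real.exp (∑ j : ZMod N, g j z)) ∂π
      = ∫⁻ z, ∏ i : Fin l, (f i z) ^ (1 / (l : ℝ)) ∂π := lintegral_congr hA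
    _ ≤ ∏ i : Fin l, (∫⁻ z, f i z ∂π) ^ (1 / (l : ℝ)) := hB2
    _ = ∏ i : Fin l, (∏ k : Fin M, I (φ (k, i))) ^ (1 / (l : ℝ)) := by
        exact Finset.prod_congr rfl fun i _ => by rw [hC i]
    _ = ∏ i : Fin l, ∏ k : Fin M, I (φ (k, i)) ^ (1 / (l : ℝ)) := by
        exact Finset.prod_congr rfl fun i _ =>
          (ENNReal.prod_rpow_of_nonneg hl0').symm
    _ = ∏ q : Fin M × Fin l, I (φ q) ^ (1 / (l : ℝ)) :=
        (Fintype.prod_prod_type_right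
          (f := fun q : Fin M × Fin l => I (φ q) ^ (1 / (l : ℝ)))).symm
    _ = ∏ j : ZMod N, I j ^ (1 / (l : ℝ)) :=
        Fintype.prod_bijective φ hφbij _ _ (fun q => rfl)
    _ = (∏ j : ZMod N, I j) ^ (1 / (l : ℝ)) := ENNReal.prod_rpow_of_nonneg hl0'
end
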